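/- arXiv:2011.04524 — 2 statements merged into one kernel-verified Lean document; each statement's English description precedes it below -/
import Mathlib

section
/- For the rack (ℤ, +1) (the free monogenic rack among permutation racks), HR_0 ≅ ℤ, HR_1 ≅ ℤ, and HR_n = 0 for n ≥ 2. -/
/-- Rack chains: free abelian group on `n`-tuples. -/
abbrev CR (X : Type) (n : ℕ) : Type := (Fin n → X) →₀ ℤ

/-- The monomial basis element. -/
noncomputable def mon {X : Type} {n : ℕ} (w : Fin n → X) : CR X n := Finsupp.single w 1

/-- Delete the `(i+1)`-st entry (1-indexed `k = i+1`). -/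
def del {X : Type} {n : ℕ} (w : Fin (n+1) → X) (i : Fin n) : Fin n → X :=
  fun j => if (j : ℕ) < (i : ℕ) then w j.castSucc else w j.succ

/-- Delete the `(i+1)`-st entry and act with it on all later entries. -/
def act {X : Type} (op : X → X → X) {n : ℕ} (w : Fin (n+1) → X) (i : Fin n) : Fin n → X :=
  fun j => if (j : ℕ) < (i : ℕ) then w j.castSucc else op (w i.castSucc) (w j.succ)

/-- Rack differential on a monomial. -/
noncomputable def dMon {X : Type} (op : X → X → X) {n : ℕ} (w : Fin (n+1) → X) : CR X n :=
  ∑ i : Fin n, ((-1 : ℤ) ^ (i : ℕ)) • (mon (del w i) - mon (act op w i))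

/-- The rack differential `CR_{n+1} → CR_n`. -/
noncomputable def d {X : Type} (op : X → X → X) (n : ℕ) : CR X (n+1) →+ CR X n :=
  Finsupp.liftAddHom fun w => zmultiplesHom _ (dMon op w)

/-- Left concatenation `w ↦ x·w`. -/
noncomputable def consHom {X : Type} (x : X) (n : ℕ) : CR X n →+ CR X (n+1) :=
  Finsupp.liftAddHom fun w => zmultiplesHom _ (mon (Fin.cons x w))

/-- Diagonal action of a map `φ` on chains. -/
noncomputable def mapChains {X : Type} (φ : X → X) (n : ℕ) : CR X n →+ CR X n :=
  Finsupp.liftAddHom fun w => zmultiplesHom _ (mon (φ ∘ w))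

/-- Cycles. -/
noncomputable def ZC {X : Type} (op : X → X → X) : (n : ℕ) → AddSubgroup (CR X n)
  | 0 => ⊤
  | (m+1) => (d op m).ker

/-- Boundaries. -/
noncomputable def BC {X : Type} (op : X → X → X) (n : ℕ) : AddSubgroup (CR X n) :=
  (d op n).range

/-- Rack homology. -/
abbrev HR (X : Type) (op : X → X → X) (n : ℕ) : Type :=
  ZC op n ⧸ ((BC op n).addSubgroupOf (ZC op n))

/-- The rack operation of a permutation rack. -/
def permOp {X : Type} (φ : X ≃ X) : X → X → X := fun _ y => φ y

/-- Multiplication by an element of `ℤX`. -/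
noncomputable def mulChain {X : Type} (v : X →₀ ℤ) (n : ℕ) : CR X n →+ CR X (n+1) :=
  ∑ x ∈ v.support, v x • consHom x n

/-- The rack operation of `(ℤ, +1)`. -/
def addOneOp : ℤ → ℤ → ℤ := fun _ y => y + 1


-- ### infrastructure
noncomputable def wlift {X Y : Type} {n m : ℕ} (f : (Fin n → X) → CR Y m) : CR X n →+ CR Y m :=
  Finsupp.liftAddHom fun w => zmultiplesHom _ (f w)

@[simp] lemma wlift_mon {X Y : Type} {n m : ℕ} (f : (Fin n → X) → CR Y m) (w : Fin n → X) :
    wlift f (mon w) = f w := by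
  simp [wlift, mon, Finsupp.liftAddHom_apply_single]

lemma hom_ext_mon {X : Type} {n : ℕ} {M : Type*} [AddCommGroup M]
    {f g : CR X n →+ M} (h : ∀ w : Fin n → X, f (mon w) = g (mon w)) : f = g := by
  apply Finsupp.addHom_ext
  intro w k
  have : (Finsupp.single w k : CR X n) = k • mon w := by
    simp [mon, Finsupp.smul_single]
  rw [this, map_zsmul, map_zsmul, h]

@[simp] lemma d_mon {X : Type} (op : X → X → X) {n : ℕ} (w : Fin (n+1) → X) :
    d op n (mon w) = dMon op w := by
  simp [d, mon, Finsupp.liftAddHom_apply_single]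

@[simp] lemma consHom_mon {X : Type} (x : X) {n : ℕ} (w : Fin n → X) :
    consHom x n (mon w) = mon (Fin.cons x w) := by
  simp [consHom, mon, Finsupp.liftAddHom_apply_single]

@[simp] lemma mapChains_mon {X : Type} (φ : X → X) {n : ℕ} (w : Fin n → X) :
    mapChains φ n (mon w) = mon (φ ∘ w) := by
  simp [mapChains, mon, Finsupp.liftAddHom_apply_single]

lemma d_zero_hom {X : Type} (op : X → X → X) : d op 0 = 0 := by
  apply hom_ext_mon; intro w; simp [dMon]

-- shift on all coordinates
noncomputable abbrev Tc (n : ℕ) : CR ℤ n →+ CR ℤ n := mapChains (· + 1) n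

-- ### the master cons formula
lemma del_cons_zero {X : Type} {n : ℕ} (x : X) (w : Fin (n+1) → X) :
    del (Fin.cons x w) 0 = w := by
  funext j; simp [del]

lemma act_cons_zero {n : ℕ} (x : ℤ) (w : Fin (n+1) → ℤ) :
    act addOneOp (Fin.cons x w) 0 = fun j => w j + 1 := by
  funext j; simp [act, addOneOp]

lemma del_cons_succ {X : Type} {n : ℕ} (x : X) (w : Fin (n+1) → X) (i : Fin n) :
    del (Fin.cons x w) i.succ = Fin.cons x (del w i) := by
  funext j
  induction j using Fin.cases with
  | zero => simp [del]
  | succ j =>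
    simp only [del, Fin.val_succ, Fin.cons_succ, add_lt_add_iff_right]
    by_cases h : (j : ℕ) < (i : ℕ)
    · rw [if_pos h, if_pos h, ← Fin.succ_castSucc, Fin.cons_succ]
    · rw [if_neg h, if_neg h]

lemma act_cons_succ {n : ℕ} (x : ℤ) (w : Fin (n+1) → ℤ) (i : Fin n) :
    act addOneOp (Fin.cons x w) i.succ = Fin.cons x (act addOneOp w i) := by
  funext j
  induction j using Fin.cases with
  | zero => simp [act]
  | succ j =>
    simp only [act, Fin.val_succ, Fin.cons_succ, add_lt_add_iff_right, addOneOp]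
    by_cases h : (j : ℕ) < (i : ℕ)
    · rw [if_pos h, if_pos h, ← Fin.succ_castSucc, Fin.cons_succ]
    · rw [if_neg h, if_neg h]

lemma d_cons (n : ℕ) (x : ℤ) (w : Fin (n+1) → ℤ) :
    d addOneOp (n+1) (mon (Fin.cons x w)) =
      mon w - mon (fun j => w j + 1) - consHom x n (d addOneOp n (mon w)) := by
  rw [d_mon, d_mon]
  unfold dMon
  rw [Fin.sum_univ_succ]
  simp only [Fin.val_zero, pow_zero, one_smul, del_cons_zero, act_cons_zero,
    del_cons_succ, act_cons_succ, Fin.val_succ, map_sum, map_zsmul, map_sub, consHom_mon]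
  rw [sub_sub, ← sub_sub, sub_eq_add_neg _ (∑ _x : Fin n, _), ← Finset.sum_neg_distrib]
  congr 1
  apply Finset.sum_congr rfl
  intro i _
  rw [pow_succ, mul_neg_one, neg_smul]

-- chunk 2 (appended logically after a.lean content)
-- shift of the last coordinate
def lastShift {n : ℕ} (w : Fin (n+1) → ℤ) : Fin (n+1) → ℤ :=
  fun j => if j = Fin.last n then w j + 1 else w j

noncomputable def tl (n : ℕ) : CR ℤ (n+1) →+ CR ℤ (n+1) := wlift (fun w => mon (lastShift w))
noncomputable def elastH (n : ℕ) : CR ℤ (n+1) →+ CR ℤ n := wlift (fun w => mon (Fin.init w))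
noncomputable def sHom (n : ℕ) : CR ℤ n →+ CR ℤ (n+1) := wlift (fun w => mon (Fin.snoc w 0))

@[simp] lemma tl_mon {n : ℕ} (w : Fin (n+1) → ℤ) : tl n (mon w) = mon (lastShift w) := by
  simp [tl]
@[simp] lemma elastH_mon {n : ℕ} (w : Fin (n+1) → ℤ) : elastH n (mon w) = mon (Fin.init w) := by
  simp [elastH]
@[simp] lemma sHom_mon {n : ℕ} (w : Fin n → ℤ) : sHom n (mon w) = mon (Fin.snoc w 0) := by
  simp [sHom]
@[simp] lemma Tc_mon {n : ℕ} (w : Fin n → ℤ) : Tc n (mon w) = mon (fun j => w j + 1) := by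
  rw [mapChains_mon]; rfl

lemma lastShift_cons {n : ℕ} (x : ℤ) (v : Fin (n+1) → ℤ) :
    lastShift (Fin.cons x v) = Fin.cons x (lastShift v) := by
  funext j
  induction j using Fin.cases with
  | zero =>
    have h0 : (0 : Fin (n+2)) ≠ Fin.last (n+1) := by
      simp [Fin.ext_iff]
    simp [lastShift, h0]
  | succ j =>
    simp only [lastShift, Fin.cons_succ]
    by_cases h : j = Fin.last n
    · subst h
      rw [if_pos (by simp [Fin.ext_iff]), if_pos rfl]
    · rw [if_neg (by simpa [Fin.ext_iff] using fun hj => h (Fin.ext hj)),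
        if_neg h]

lemma lastShift_one {v : Fin 1 → ℤ} : lastShift v = fun j => v j + 1 := by
  funext j
  have : j = Fin.last 0 := Fin.ext (by omega)
  simp [lastShift, this]

lemma lastShift_shift {n : ℕ} (v : Fin (n+1) → ℤ) :
    lastShift (fun j => v j + 1) = fun j => lastShift v j + 1 := by
  funext j; by_cases h : j = Fin.last n <;> simp [lastShift, h]

lemma init_cons {X : Type} {n : ℕ} (x : X) (v : Fin (n+1) → X) :
    Fin.init (Fin.cons x v : Fin (n+2) → X) = (Fin.cons x (Fin.init v) : Fin (n+1) → X) := by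
  funext j
  induction j using Fin.cases with
  | zero => simp [Fin.init]
  | succ j => simp [Fin.init, Fin.cons_succ, ← Fin.succ_castSucc]

lemma comp_cons_shift {n : ℕ} (x : ℤ) (v : Fin n → ℤ) :
    (fun j => (Fin.cons x v : Fin (n+1) → ℤ) j + 1) = Fin.cons (x+1) (fun j => v j + 1) := by
  funext j
  induction j using Fin.cases with
  | zero => simp
  | succ j => simp

-- hom-level cons compatibilities
lemma Tc_comp_cons (n : ℕ) (x : ℤ) :
    (Tc (n+1)).comp (consHom x n) = (consHom (x+1) n).comp (Tc n) := by
  apply hom_ext_mon; intro w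
  simp only [AddMonoidHom.comp_apply, consHom_mon, Tc_mon, comp_cons_shift]

lemma tl_comp_cons (n : ℕ) (x : ℤ) :
    (tl (n+1)).comp (consHom x (n+1)) = (consHom x (n+1)).comp (tl n) := by
  apply hom_ext_mon; intro w
  simp only [AddMonoidHom.comp_apply, consHom_mon, tl_mon, lastShift_cons]

lemma elastH_comp_cons (n : ℕ) (x : ℤ) :
    (elastH (n+1)).comp (consHom x (n+1)) = (consHom x n).comp (elastH n) := by
  apply hom_ext_mon; intro w
  simp only [AddMonoidHom.comp_apply, consHom_mon, elastH_mon, init_cons]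

lemma elastH_comp_sHom (n : ℕ) :
    (elastH n).comp (sHom n) = AddMonoidHom.id _ := by
  apply hom_ext_mon; intro w
  simp only [AddMonoidHom.comp_apply, sHom_mon, elastH_mon, Fin.init_snoc,
    AddMonoidHom.id_apply]

-- d commutes with Tc
lemma d_comp_Tc : ∀ n : ℕ, (d addOneOp n).comp (Tc (n+1)) = (Tc n).comp (d addOneOp n)
  | 0 => by
    have h0 : d (X := ℤ) addOneOp 0 = 0 := d_zero_hom addOneOp
    rw [h0]; simp
  | (n+1) => by
    apply hom_ext_mon; intro w
    rw [← Fin.cons_self_tail w]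
    set x := w 0
    set v := Fin.tail w
    simp only [AddMonoidHom.comp_apply, Tc_mon, comp_cons_shift]
    rw [d_cons, d_cons]
    have IH := DFunLike.congr_fun (d_comp_Tc n) (mon v)
    simp only [AddMonoidHom.comp_apply, Tc_mon] at IH
    rw [IH]
    have hc := DFunLike.congr_fun (Tc_comp_cons n x) (d addOneOp n (mon v))
    simp only [AddMonoidHom.comp_apply] at hc
    rw [map_sub, map_sub, Tc_mon, Tc_mon, hc]

-- d commutes with tl
lemma d_comp_tl : ∀ n : ℕ, (d addOneOp (n+1)).comp (tl (n+1)) = (tl n).comp (d addOneOp (n+1))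
  | 0 => by
    apply hom_ext_mon; intro w
    rw [← Fin.cons_self_tail w]
    set x := w 0
    set v := Fin.tail w
    simp only [AddMonoidHom.comp_apply, tl_mon, lastShift_cons]
    rw [d_cons, d_cons]
    have h0 : d (X := ℤ) addOneOp 0 = 0 := d_zero_hom addOneOp
    rw [h0]
    simp only [AddMonoidHom.zero_apply, map_zero, sub_zero, map_sub, tl_mon]
    rw [lastShift_one (v := v), lastShift_one (v := fun j => v j + 1)]
  | (n+1) => by
    apply hom_ext_mon; intro w
    rw [← Fin.cons_self_tail w]
    set x := w 0
    set v := Fin.tail w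
    simp only [AddMonoidHom.comp_apply, tl_mon, lastShift_cons]
    rw [d_cons, d_cons]
    have IH := DFunLike.congr_fun (d_comp_tl n) (mon v)
    simp only [AddMonoidHom.comp_apply, tl_mon] at IH
    have hc := DFunLike.congr_fun (tl_comp_cons n x) (d addOneOp (n+1) (mon v))
    simp only [AddMonoidHom.comp_apply] at hc
    rw [map_sub, map_sub, tl_mon, tl_mon, IH, hc, lastShift_shift]


-- chunk 3
lemma init_shift {n : ℕ} (v : Fin (n+1) → ℤ) :
    Fin.init (fun j => v j + 1) = fun j => Fin.init v j + 1 := by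
  funext j; simp [Fin.init]

-- elastH is a chain map
lemma elastH_comp_d : ∀ n : ℕ,
    (elastH n).comp (d addOneOp (n+1)) = (d addOneOp n).comp (elastH (n+1))
  | 0 => by
    apply hom_ext_mon; intro w
    rw [← Fin.cons_self_tail w]
    set x := w 0
    set v := Fin.tail w
    simp only [AddMonoidHom.comp_apply, elastH_mon, init_cons]
    rw [d_cons]
    have h0 : d (X := ℤ) addOneOp 0 = 0 := d_zero_hom addOneOp
    rw [h0]
    simp only [AddMonoidHom.zero_apply, map_zero, sub_zero, map_sub, elastH_mon]
    have hv : Fin.init (fun j => v j + 1) = Fin.init v := by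
      funext j; exact j.elim0
    rw [hv, sub_self]
  | (n+1) => by
    apply hom_ext_mon; intro w
    rw [← Fin.cons_self_tail w]
    set x := w 0
    set v := Fin.tail w
    simp only [AddMonoidHom.comp_apply, elastH_mon, init_cons]
    rw [d_cons, d_cons, map_sub, map_sub, elastH_mon, elastH_mon]
    have hc := DFunLike.congr_fun (elastH_comp_cons n x) (d addOneOp (n+1) (mon v))
    simp only [AddMonoidHom.comp_apply] at hc
    have IH := DFunLike.congr_fun (elastH_comp_d n) (mon v)
    simp only [AddMonoidHom.comp_apply, elastH_mon] at IH
    rw [hc, IH, init_shift]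

-- hom-level h-homotopy: d ∘ cons_x = id - Tc - cons_x ∘ d
lemma d_comp_consHom (n : ℕ) (x : ℤ) :
    (d addOneOp (n+1)).comp (consHom x (n+1)) =
      AddMonoidHom.id _ - Tc (n+1) - (consHom x n).comp (d addOneOp n) := by
  apply hom_ext_mon; intro w
  simp only [AddMonoidHom.comp_apply, AddMonoidHom.sub_apply, AddMonoidHom.id_apply,
    consHom_mon, Tc_mon]
  rw [d_cons]

-- ### the duplication homotopy P
noncomputable def P : (n : ℕ) → (CR ℤ (n+1) →+ CR ℤ (n+2))
  | 0 => 0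
  | (n+1) => wlift (fun w =>
      mon (Fin.cons (w 0) w) - consHom (w 0) (n+2) (P n (mon (Fin.tail w))))

lemma P_zero : P 0 = 0 := rfl

@[simp] lemma P_mon_cons {n : ℕ} (x : ℤ) (v : Fin (n+1) → ℤ) :
    P (n+1) (mon (Fin.cons x v)) =
      mon (Fin.cons x (Fin.cons x v)) - consHom x (n+2) (P n (mon v)) := by
  show wlift _ (mon _) = _
  rw [wlift_mon, Fin.cons_zero, Fin.tail_cons]

lemma P_comp_consHom (n : ℕ) (x : ℤ) :
    (P (n+1)).comp (consHom x (n+1)) =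
      (consHom x (n+2)).comp (consHom x (n+1)) - (consHom x (n+2)).comp (P n) := by
  apply hom_ext_mon; intro w
  simp only [AddMonoidHom.comp_apply, AddMonoidHom.sub_apply, consHom_mon, P_mon_cons]

lemma P_comp_Tc : ∀ n : ℕ, (P n).comp (Tc (n+1)) = (Tc (n+2)).comp (P n)
  | 0 => by rw [P_zero]; simp
  | (n+1) => by
    apply hom_ext_mon; intro w
    rw [← Fin.cons_self_tail w]
    set x := w 0
    set v := Fin.tail w
    simp only [AddMonoidHom.comp_apply, Tc_mon, comp_cons_shift, P_mon_cons]
    have IH := DFunLike.congr_fun (P_comp_Tc n) (mon v)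
    simp only [AddMonoidHom.comp_apply, Tc_mon] at IH
    have hc := DFunLike.congr_fun (Tc_comp_cons (n+2) x) (P n (mon v))
    simp only [AddMonoidHom.comp_apply] at hc
    rw [map_sub, Tc_mon, comp_cons_shift, hc, IH]
    simp only [comp_cons_shift]

-- the key homotopy identity:  d ∘ P + P ∘ d = tl - Tc  (in degrees ≥ 2)
lemma homotopy_P : ∀ n : ℕ,
    (d addOneOp (n+2)).comp (P (n+1)) + (P n).comp (d addOneOp (n+1))
      = (tl (n+1) : CR ℤ (n+2) →+ CR ℤ (n+2)) - Tc (n+2)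
  | 0 => by
    apply hom_ext_mon; intro w
    rw [← Fin.cons_self_tail w]
    set x := w 0
    set v := Fin.tail w
    simp only [AddMonoidHom.add_apply, AddMonoidHom.sub_apply, AddMonoidHom.comp_apply,
      P_mon_cons, tl_mon, Tc_mon, P_zero, AddMonoidHom.zero_apply, map_zero, sub_zero,
      add_zero]
    rw [d_cons, d_cons]
    have h0 : d (X := ℤ) addOneOp 0 = 0 := d_zero_hom addOneOp
    rw [h0]
    simp only [AddMonoidHom.zero_apply, map_zero, sub_zero, map_sub, consHom_mon]
    rw [lastShift_cons, lastShift_one (v := v), comp_cons_shift]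
    abel
  | (n+1) => by
    apply hom_ext_mon; intro w
    rw [← Fin.cons_self_tail w]
    set x := w 0
    set v := Fin.tail w
    simp only [AddMonoidHom.add_apply, AddMonoidHom.sub_apply, AddMonoidHom.comp_apply,
      P_mon_cons, tl_mon, Tc_mon]
    have IH := DFunLike.congr_fun (homotopy_P n) (mon v)
    simp only [AddMonoidHom.add_apply, AddMonoidHom.sub_apply, AddMonoidHom.comp_apply,
      tl_mon, Tc_mon] at IH
    have hd : d addOneOp (n+2) (P (n+1) (mon v))
        = mon (lastShift v) - mon (fun j => v j + 1) - P n (d addOneOp (n+1) (mon v)) := by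
      rw [← IH]; abel
    have hdc := DFunLike.congr_fun (d_comp_consHom (n+2) x) (P (n+1) (mon v))
    simp only [AddMonoidHom.comp_apply, AddMonoidHom.sub_apply, AddMonoidHom.id_apply] at hdc
    have hPc := DFunLike.congr_fun (P_comp_consHom n x) (d addOneOp (n+1) (mon v))
    simp only [AddMonoidHom.comp_apply, AddMonoidHom.sub_apply] at hPc
    have hPT : P (n+1) (mon (fun j => v j + 1)) = Tc (n+3) (P (n+1) (mon v)) := by
      have h2 := DFunLike.congr_fun (P_comp_Tc (n+1)) (mon v)
      simp only [AddMonoidHom.comp_apply, Tc_mon] at h2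
      rw [← h2]
    rw [map_sub, d_cons, d_cons, hdc, hd]
    simp only [map_sub]
    rw [hPc, hPT, lastShift_cons, comp_cons_shift]
    simp only [consHom_mon, map_sub]
    abel

-- chunk 4 : degree-one facts, the (1 - tl) machinery, d∘d = 0, and the main vanishing lemma

-- total augmentation
noncomputable def etot (n : ℕ) : CR ℤ n →+ ℤ :=
  Finsupp.liftAddHom fun _ => zmultiplesHom ℤ 1

@[simp] lemma etot_mon {n : ℕ} (w : Fin n → ℤ) : etot n (mon w) = 1 := by
  simp [etot, mon, Finsupp.liftAddHom_apply_single]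

lemma etot_comp_cons (n : ℕ) (x : ℤ) : (etot (n+1)).comp (consHom x n) = etot n := by
  apply hom_ext_mon; intro w
  simp [AddMonoidHom.comp_apply]

lemma etot_comp_d : ∀ n : ℕ, (etot n).comp (d addOneOp n) = 0
  | 0 => by
    have h0 : d (X := ℤ) addOneOp 0 = 0 := d_zero_hom addOneOp
    rw [h0]; simp
  | (n+1) => by
    apply hom_ext_mon; intro w
    rw [← Fin.cons_self_tail w]
    simp only [AddMonoidHom.comp_apply, AddMonoidHom.zero_apply]
    rw [d_cons, map_sub, map_sub, etot_mon, etot_mon]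
    have hc := DFunLike.congr_fun (etot_comp_cons n (w 0)) (d addOneOp n (mon (Fin.tail w)))
    simp only [AddMonoidHom.comp_apply] at hc
    have IH := DFunLike.congr_fun (etot_comp_d n) (mon (Fin.tail w))
    simp only [AddMonoidHom.comp_apply, AddMonoidHom.zero_apply] at IH
    rw [hc, IH]
    ring

lemma etot_comp_elast (n : ℕ) : (etot n).comp (elastH n) = etot (n+1) := by
  apply hom_ext_mon; intro w
  simp [AddMonoidHom.comp_apply]

-- the position functional in degree one
noncomputable def phi1 : CR ℤ 1 →+ ℤ :=
  Finsupp.liftAddHom fun w => zmultiplesHom ℤ (w 0)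

@[simp] lemma phi1_mon (w : Fin 1 → ℤ) : phi1 (mon w) = w 0 := by
  simp [phi1, mon, Finsupp.liftAddHom_apply_single]

lemma phi1_comp_d : phi1.comp (d addOneOp 1) = -(etot 2) := by
  apply hom_ext_mon; intro w
  rw [← Fin.cons_self_tail w]
  simp only [AddMonoidHom.comp_apply, AddMonoidHom.neg_apply, etot_mon]
  rw [d_cons]
  have h0 : d (X := ℤ) addOneOp 0 = 0 := d_zero_hom addOneOp
  rw [h0]
  simp only [AddMonoidHom.zero_apply, map_zero, sub_zero, map_sub, phi1_mon]
  ring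

-- a generic induction principle: to check `F c ∈ s` for all `c`, check it on monomials
lemma forall_mem_of_mon {X : Type} {n : ℕ} {M : Type} [AddCommGroup M]
    (F : CR X n →+ M) (s : AddSubgroup M) (h : ∀ w : Fin n → X, F (mon w) ∈ s) :
    ∀ c : CR X n, F c ∈ s := by
  intro c
  induction c using Finsupp.induction with
  | zero => simpa using s.zero_mem
  | single_add w k f _ _ ih =>
    rw [map_add]
    refine s.add_mem ?_ ih
    have hs : (Finsupp.single w k : CR X n) = k • mon w := by
      simp [mon, Finsupp.smul_single]
    rw [hs, map_zsmul]
    exact s.zsmul_mem (h w) k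

-- degree-one telescoping
lemma mon_sub_mem_range (y : ℤ) :
    mon (fun _ => y : Fin 1 → ℤ) - mon (fun _ => (0:ℤ)) ∈ (d addOneOp 1).range := by
  induction y using Int.induction_on with
  | zero => rw [sub_self]; exact AddSubgroup.zero_mem _
  | succ k ih =>
    have hd : d addOneOp 1 (mon (Fin.cons 0 (fun _ => (k:ℤ)))) =
        mon (fun _ => (k:ℤ)) - mon (fun _ => (k:ℤ)+1) := by
      rw [d_cons]
      have h0 : d (X := ℤ) addOneOp 0 = 0 := d_zero_hom addOneOp
      rw [h0]
      simp
    have h1 : mon (fun _ => ((k:ℤ)+1)) - mon (fun _ => (0:ℤ))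
        = -(d addOneOp 1 (mon (Fin.cons 0 (fun _ => (k:ℤ)))))
          + (mon (fun _ => (k:ℤ)) - mon (fun _ => (0:ℤ))) := by
      rw [hd]; abel
    rw [h1]
    exact AddSubgroup.add_mem _ (AddSubgroup.neg_mem _ ⟨_, rfl⟩) ih
  | pred k ih =>
    have hd : d addOneOp 1 (mon (Fin.cons 0 (fun _ => (-(k:ℤ)-1)))) =
        mon (fun _ => (-(k:ℤ)-1)) - mon (fun _ => -(k:ℤ)-1+1) := by
      rw [d_cons]
      have h0 : d (X := ℤ) addOneOp 0 = 0 := d_zero_hom addOneOp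
      rw [h0]
      simp
    have h1 : mon (fun _ => (-(k:ℤ)-1)) - mon (fun _ => (0:ℤ))
        = (d addOneOp 1 (mon (Fin.cons 0 (fun _ => (-(k:ℤ)-1)))))
          + (mon (fun _ => -(k:ℤ)-1+1) - mon (fun _ => (0:ℤ))) := by
      rw [hd]; abel
    have h2 : (fun _ : Fin 1 => -(k:ℤ)-1+1) = (fun _ : Fin 1 => -(k:ℤ)) := by funext _; ring
    rw [h1, h2]
    refine AddSubgroup.add_mem _ ⟨_, rfl⟩ ?_
    simpa using ih

lemma sub_etot_mem_range (c : CR ℤ 1) :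
    c - etot 1 c • mon (fun _ => (0:ℤ)) ∈ (d addOneOp 1).range := by
  have F : CR ℤ 1 →+ CR ℤ 1 :=
    AddMonoidHom.id _ - (zmultiplesHom _ (mon (fun _ => (0:ℤ)))).comp (etot 1)
  have key := forall_mem_of_mon
    (AddMonoidHom.id _ - (zmultiplesHom _ (mon (fun _ => (0:ℤ)))).comp (etot 1))
    (d addOneOp 1).range ?_ c
  · simpa using key
  · intro w
    simp only [AddMonoidHom.sub_apply, AddMonoidHom.id_apply, AddMonoidHom.comp_apply,
      etot_mon, zmultiplesHom_apply, one_smul]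
    have hw : w = (fun _ => w 0) := by
      funext j
      have : j = 0 := Subsingleton.elim j 0
      rw [this]
    rw [hw]
    exact mon_sub_mem_range (w 0)

-- lastShift on snoc
lemma lastShift_snoc {n : ℕ} (v : Fin n → ℤ) (y : ℤ) :
    lastShift (Fin.snoc v y) = Fin.snoc v (y+1) := by
  funext j
  by_cases h : j = Fin.last n
  · subst h; simp [lastShift, Fin.snoc_last]
  · obtain ⟨k, rfl⟩ := Fin.exists_castSucc_eq.mpr h
    simp [lastShift, h, Fin.snoc_castSucc]

lemma mon_snoc_sub_mem (n : ℕ) (v : Fin n → ℤ) (y : ℤ) :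
    mon (Fin.snoc v y) - mon (Fin.snoc v 0) ∈
      (AddMonoidHom.id (CR ℤ (n+1)) - tl n).range := by
  induction y using Int.induction_on with
  | zero => rw [sub_self]; exact AddSubgroup.zero_mem _
  | succ k ih =>
    have hd : (AddMonoidHom.id (CR ℤ (n+1)) - tl n) (mon (Fin.snoc v (k:ℤ)))
        = mon (Fin.snoc v (k:ℤ)) - mon (Fin.snoc v ((k:ℤ)+1)) := by
      simp only [AddMonoidHom.sub_apply, AddMonoidHom.id_apply, tl_mon, lastShift_snoc]
    have h1 : mon (Fin.snoc v ((k:ℤ)+1)) - mon (Fin.snoc v 0)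
        = -((AddMonoidHom.id (CR ℤ (n+1)) - tl n) (mon (Fin.snoc v (k:ℤ))))
          + (mon (Fin.snoc v (k:ℤ)) - mon (Fin.snoc v 0)) := by
      rw [hd]; abel
    rw [h1]
    exact AddSubgroup.add_mem _ (AddSubgroup.neg_mem _ ⟨_, rfl⟩) ih
  | pred k ih =>
    have hd : (AddMonoidHom.id (CR ℤ (n+1)) - tl n) (mon (Fin.snoc v (-(k:ℤ)-1)))
        = mon (Fin.snoc v (-(k:ℤ)-1)) - mon (Fin.snoc v (-(k:ℤ)-1+1)) := by
      simp only [AddMonoidHom.sub_apply, AddMonoidHom.id_apply, tl_mon, lastShift_snoc]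
    have h2 : (-(k:ℤ)-1+1) = -(k:ℤ) := by ring
    have h1 : mon (Fin.snoc v (-(k:ℤ)-1)) - mon (Fin.snoc v 0)
        = ((AddMonoidHom.id (CR ℤ (n+1)) - tl n) (mon (Fin.snoc v (-(k:ℤ)-1))))
          + (mon (Fin.snoc v (-(k:ℤ))) - mon (Fin.snoc v 0)) := by
      rw [hd, h2]; abel
    rw [h1]
    exact AddSubgroup.add_mem _ ⟨_, rfl⟩ (by simpa using ih)

lemma sub_s_elast_mem (n : ℕ) (z : CR ℤ (n+1)) :
    z - sHom n (elastH n z) ∈ (AddMonoidHom.id (CR ℤ (n+1)) - tl n).range := by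
  have key := forall_mem_of_mon
    (AddMonoidHom.id _ - ((sHom n).comp (elastH n)))
    (AddMonoidHom.id (CR ℤ (n+1)) - tl n).range ?_ z
  · simpa using key
  · intro w
    simp only [AddMonoidHom.sub_apply, AddMonoidHom.id_apply, AddMonoidHom.comp_apply,
      elastH_mon, sHom_mon]
    have hw : mon w = mon (Fin.snoc (Fin.init w) (w (Fin.last n))) := by
      rw [Fin.snoc_init_self]
    rw [hw]
    exact mon_snoc_sub_mem n (Fin.init w) (w (Fin.last n))

-- injectivity of 1 - tl
lemma lastShift_injective {n : ℕ} : Function.Injective (lastShift (n := n)) := by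
  intro a b hab
  funext j
  have hj := congrFun hab j
  simp only [lastShift] at hj
  by_cases h : j = Fin.last n
  · rw [if_pos h, if_pos h] at hj; omega
  · rwa [if_neg h, if_neg h] at hj

lemma tl_eq_mapDomain {n : ℕ} (v : CR ℤ (n+1)) : tl n v = Finsupp.mapDomain lastShift v := by
  have : tl n = (Finsupp.mapDomain.addMonoidHom lastShift :
      CR ℤ (n+1) →+ CR ℤ (n+1)) := by
    apply hom_ext_mon; intro w
    rw [tl_mon]
    simp [mon, Finsupp.mapDomain.addMonoidHom_apply, Finsupp.mapDomain_single]
  rw [this, Finsupp.mapDomain.addMonoidHom_apply]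

lemma one_sub_tl_injective (n : ℕ) (v : CR ℤ (n+1)) (hv : v - tl n v = 0) : v = 0 := by
  by_contra hne
  have hvt : v = tl n v := by
    have := sub_eq_zero.mp hv; exact this
  classical
  have hsupp : v.support = v.support.image lastShift := by
    conv_lhs => rw [hvt]
    rw [tl_eq_mapDomain]
    exact Finsupp.mapDomain_support_of_injective lastShift_injective v
  have hSne : (v.support.image (fun w => w (Fin.last n))).Nonempty := by
    apply Finset.Nonempty.image
    rw [Finsupp.support_nonempty_iff]
    exact hne
  have hstep : ∀ a ∈ v.support.image (fun w => w (Fin.last n)),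
      a + 1 ∈ v.support.image (fun w => w (Fin.last n)) := by
    intro a ha
    obtain ⟨w, hw, rfl⟩ := Finset.mem_image.mp ha
    have hw2 : lastShift w ∈ v.support := by
      rw [hsupp]
      exact Finset.mem_image_of_mem _ hw
    refine Finset.mem_image.mpr ⟨lastShift w, hw2, ?_⟩
    simp [lastShift]
  have h1 := hstep _ (Finset.max'_mem _ hSne)
  have h2 := Finset.le_max' _ _ h1
  exact absurd h2 (by exact fun h => lt_irrefl _ (lt_of_lt_of_le (lt_add_one _) h))

-- d ∘ d = 0
lemma d_comp_d : ∀ n : ℕ, (d addOneOp n).comp (d addOneOp (n+1)) = 0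
  | 0 => by
    have h0 : d (X := ℤ) addOneOp 0 = 0 := d_zero_hom addOneOp
    rw [h0]; simp
  | (n+1) => by
    apply hom_ext_mon; intro w
    rw [← Fin.cons_self_tail w]
    set x := w 0
    set v := Fin.tail w
    simp only [AddMonoidHom.comp_apply, AddMonoidHom.zero_apply]
    rw [d_cons, map_sub, map_sub]
    have hdc := DFunLike.congr_fun (d_comp_consHom n x) (d addOneOp (n+1) (mon v))
    simp only [AddMonoidHom.comp_apply, AddMonoidHom.sub_apply, AddMonoidHom.id_apply] at hdc
    rw [hdc]
    have hT : d addOneOp (n+1) (mon (fun j => v j + 1)) = Tc (n+1) (d addOneOp (n+1) (mon v)) := by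
      have := DFunLike.congr_fun (d_comp_Tc (n+1)) (mon v)
      simp only [AddMonoidHom.comp_apply, Tc_mon] at this
      rw [← this]
    rw [hT]
    have IH := DFunLike.congr_fun (d_comp_d n) (mon v)
    simp only [AddMonoidHom.comp_apply, AddMonoidHom.zero_apply] at IH
    rw [IH, map_zero]
    abel

-- the chase
lemma chase (n : ℕ) (z : CR ℤ (n+2)) (hz : d addOneOp (n+1) z = 0)
    (u : CR ℤ (n+2)) (hu : d addOneOp (n+1) u = elastH (n+1) z) :
    z ∈ (d addOneOp (n+2)).range := by
  set z' : CR ℤ (n+2) := z - d addOneOp (n+2) (sHom (n+2) u) with hz'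
  -- elastH z' = 0
  have helast : elastH (n+1) z' = 0 := by
    rw [hz', map_sub]
    have hcd := DFunLike.congr_fun (elastH_comp_d (n+1)) (sHom (n+2) u)
    simp only [AddMonoidHom.comp_apply] at hcd
    rw [hcd]
    have hse := DFunLike.congr_fun (elastH_comp_sHom (n+2)) u
    simp only [AddMonoidHom.comp_apply, AddMonoidHom.id_apply] at hse
    rw [hse, hu, sub_self]
  -- z' is a cycle
  have hz'cycle : d addOneOp (n+1) z' = 0 := by
    rw [hz', map_sub, hz]
    have hdd := DFunLike.congr_fun (d_comp_d (n+1)) (sHom (n+2) u)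
    simp only [AddMonoidHom.comp_apply, AddMonoidHom.zero_apply] at hdd
    rw [hdd, sub_zero]
  -- obtain y with (1 - tl) y = z'
  obtain ⟨y, hy⟩ : z' ∈ (AddMonoidHom.id (CR ℤ (n+2)) - tl (n+1)).range := by
    have := sub_s_elast_mem (n+1) z'
    rwa [helast, map_zero, sub_zero] at this
  simp only [AddMonoidHom.sub_apply, AddMonoidHom.id_apply] at hy
  -- y is a cycle
  have hdy : d addOneOp (n+1) y = 0 := by
    apply one_sub_tl_injective
    have hcomm := DFunLike.congr_fun (d_comp_tl n) y
    simp only [AddMonoidHom.comp_apply] at hcomm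
    rw [← hcomm, ← map_sub, hy, hz'cycle]
  -- z' = d (cons_0 y - P y)
  have hkey : d addOneOp (n+2) (consHom 0 (n+2) y - P (n+1) y) = z' := by
    rw [map_sub]
    have hc := DFunLike.congr_fun (d_comp_consHom (n+1) 0) y
    simp only [AddMonoidHom.comp_apply, AddMonoidHom.sub_apply, AddMonoidHom.id_apply] at hc
    have hp := DFunLike.congr_fun (homotopy_P n) y
    simp only [AddMonoidHom.add_apply, AddMonoidHom.sub_apply, AddMonoidHom.comp_apply] at hp
    rw [hc, hdy, map_zero, sub_zero]
    have hp' : d addOneOp (n+2) (P (n+1) y) = tl (n+1) y - Tc (n+2) y := by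
      rw [← hp, hdy, map_zero, add_zero]
    rw [hp', ← hy]
    abel
  refine ⟨sHom (n+2) u + (consHom 0 (n+2) y - P (n+1) y), ?_⟩
  rw [map_add, hkey, hz']
  abel

-- main vanishing lemma
lemma cycles_bound : ∀ k : ℕ, ∀ z : CR ℤ (k+2), d addOneOp (k+1) z = 0 →
    z ∈ (d addOneOp (k+2)).range
  | 0 => by
    intro z hz
    have hetot : etot 1 (elastH 1 z) = 0 := by
      have h1 := DFunLike.congr_fun (etot_comp_elast 1) z
      simp only [AddMonoidHom.comp_apply] at h1
      have h2 := DFunLike.congr_fun phi1_comp_d z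
      simp only [AddMonoidHom.comp_apply, AddMonoidHom.neg_apply] at h2
      rw [hz, map_zero] at h2
      have h3 : etot 2 z = 0 := by omega
      rw [h1]
      exact h3
    have hm := sub_etot_mem_range (elastH 1 z)
    rw [hetot, zero_smul, sub_zero] at hm
    obtain ⟨u, hu⟩ := hm
    exact chase 0 z hz u hu
  | (k+1) => by
    intro z hz
    have hc : d addOneOp (k+1) (elastH (k+2) z) = 0 := by
      have := DFunLike.congr_fun (elastH_comp_d (k+1)) z
      simp only [AddMonoidHom.comp_apply] at this
      rw [← this, hz, map_zero]
    obtain ⟨u, hu⟩ := cycles_bound k (elastH (k+2) z) hc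
    exact chase (k+1) z hz u hu

-- chunk 5 : assembling the homology computations

noncomputable def quotTopEquiv {G : Type} [AddCommGroup G] (H : AddSubgroup G) :
    ((⊤ : AddSubgroup G) ⧸ H.addSubgroupOf ⊤) ≃+ G ⧸ H := by
  have hker : ((QuotientAddGroup.mk' H).comp (AddSubgroup.subtype ⊤)).ker
      = H.addSubgroupOf ⊤ := by
    ext x
    rw [AddMonoidHom.mem_ker, AddMonoidHom.comp_apply, AddSubgroup.coe_subtype,
      QuotientAddGroup.mk'_apply, QuotientAddGroup.eq_zero_iff,
      AddSubgroup.mem_addSubgroupOf]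
  have hsurj : Function.Surjective ((QuotientAddGroup.mk' H).comp (AddSubgroup.subtype ⊤)) := by
    intro q
    obtain ⟨g, rfl⟩ := QuotientAddGroup.mk'_surjective H q
    exact ⟨⟨g, trivial⟩, rfl⟩
  exact (QuotientAddGroup.quotientAddEquivOfEq hker.symm).trans
    (QuotientAddGroup.quotientKerEquivOfSurjective _ hsurj)

lemma BC_zero : BC (X := ℤ) addOneOp 0 = ⊥ := by
  show (d addOneOp 0).range = ⊥
  rw [d_zero_hom]
  exact AddMonoidHom.range_zero

lemma ZC_one : ZC (X := ℤ) addOneOp 1 = ⊤ := by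
  show (d addOneOp 0).ker = ⊤
  rw [d_zero_hom]
  exact AddMonoidHom.ker_zero

lemma BC_one : BC (X := ℤ) addOneOp 1 = (etot 1).ker := by
  ext c
  constructor
  · rintro ⟨u, rfl⟩
    have := DFunLike.congr_fun (etot_comp_d 1) u
    simpa [AddMonoidHom.mem_ker] using this
  · intro hc
    have hc0 : etot 1 c = 0 := hc
    have := sub_etot_mem_range c
    rw [hc0, zero_smul, sub_zero] at this
    exact this

noncomputable def HR0equiv : HR ℤ addOneOp 0 ≃+ ℤ :=
  (quotTopEquiv (BC addOneOp 0)).trans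
    ((QuotientAddGroup.quotientAddEquivOfEq BC_zero).trans
      ((QuotientAddGroup.quotientBot).trans AddEquiv.finsuppUnique))

noncomputable def HR1equiv : HR ℤ addOneOp 1 ≃+ ℤ :=
  ((QuotientAddGroup.equivQuotientAddSubgroupOfOfEq (rfl : BC addOneOp 1 = BC addOneOp 1)
      ZC_one).trans
    ((quotTopEquiv (BC addOneOp 1)).trans
      ((QuotientAddGroup.quotientAddEquivOfEq BC_one).trans
        (QuotientAddGroup.quotientKerEquivOfSurjective (etot 1)
          (fun k => ⟨k • mon (fun _ => (0:ℤ)), by simp⟩)))))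


/-- For the rack `(ℤ, +1)`: `HR_0 ≅ ℤ`, `HR_1 ≅ ℤ`, and `HR_n = 0` for `n ≥ 2`. -/
theorem monogenic_free_rack_homology :
    Nonempty (HR ℤ addOneOp 0 ≃+ ℤ) ∧ Nonempty (HR ℤ addOneOp 1 ≃+ ℤ) ∧
      ∀ n : ℕ, 2 ≤ n → Subsingleton (HR ℤ addOneOp n) := by
  refine ⟨⟨HR0equiv⟩, ⟨HR1equiv⟩, ?_⟩
  intro n hn
  obtain ⟨k, rfl⟩ : ∃ k, n = k + 2 := ⟨n - 2, by omega⟩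
  have htop : (BC addOneOp (k+2)).addSubgroupOf (ZC (X := ℤ) addOneOp (k+2)) = ⊤ := by
    rw [AddSubgroup.addSubgroupOf_eq_top]
    intro z hz
    have hz' : d addOneOp (k+1) z = 0 := hz
    exact cycles_bound k z hz'
  unfold HR
  rw [htop]
  exact QuotientAddGroup.subsingleton_quotient_top
end

section
/- Naive Künneth fails for rack homology: for the product rack (ℤ, +1) × (S, id) with S a set of cardinality r ≥ 2, the rank of HR_n of the product (which is r(r−1)^{n−1}) differs from Σ_{p+q=n} rank HR_p(ℤ,+1) · rank HR_q(S,id) = r^n + r^{n−1} for n ≥ 2. -/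
/-- The product rack `(ℤ, +1) × (S, id)`: componentwise rack operation. -/
def prodOp (S : Type) : ℤ × S → ℤ × S → ℤ × S := fun _ p => (p.1 + 1, p.2)

noncomputable section
namespace NKF
open Finsupp

attribute [local instance] Classical.propDecidable

variable {S : Type}

/-! ### Basic lemmas about `mon`, `consHom` -/

lemma consHom_mon {X : Type} (y : X) {n : ℕ} (w : Fin n → X) :
    consHom y n (mon w) = mon (Fin.cons y w) := by
  simp [consHom, mon, Finsupp.liftAddHom_apply_single]

lemma ext_mon {X G : Type} [AddCommGroup G] {n : ℕ} {f g : CR X n →+ G}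
    (h : ∀ w, f (mon w) = g (mon w)) : f = g := by
  apply Finsupp.addHom_ext
  intro w k
  have hk : (Finsupp.single w k : CR X n) = k • mon w := by
    simp [mon, Finsupp.smul_single]
  rw [hk, map_zsmul, map_zsmul, h]

lemma hom_ext_apply {X G : Type} [AddCommGroup G] {n : ℕ} {f g : CR X n →+ G}
    (h : ∀ w, f (mon w) = g (mon w)) (x : CR X n) : f x = g x := by
  rw [ext_mon h]

/-! ### Head shift -/

/-- Shift the integer coordinate of the first letter by `a`. -/
def hs (a : ℤ) (n : ℕ) : CR (ℤ × S) (n+1) →+ CR (ℤ × S) (n+1) :=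
  Finsupp.liftAddHom fun w =>
    zmultiplesHom _ (mon (Fin.cons ((w 0).1 + a, (w 0).2) (Fin.tail w)))

lemma hs_mon (a : ℤ) (n : ℕ) (w : Fin (n+1) → ℤ × S) :
    hs a n (mon w) = mon (Fin.cons ((w 0).1 + a, (w 0).2) (Fin.tail w)) := by
  simp [hs, mon, Finsupp.liftAddHom_apply_single]

lemma hs_cons (a : ℤ) (n : ℕ) (y : ℤ × S) (v : Fin n → ℤ × S) :
    hs a n (mon (Fin.cons y v)) = mon (Fin.cons ((y.1 + a, y.2)) v) := by
  rw [hs_mon]; simp [Fin.tail_cons]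

lemma hs_zero_apply (n : ℕ) (x : CR (ℤ × S) (n+1)) : hs 0 n x = x := by
  refine hom_ext_apply (g := AddMonoidHom.id _) (fun w => ?_) x
  rw [hs_mon]; simp [Fin.cons_self_tail]

lemma hs_hs (a b : ℤ) (n : ℕ) (x : CR (ℤ × S) (n+1)) : hs a n (hs b n x) = hs (b + a) n x := by
  refine hom_ext_apply (f := (hs a n).comp (hs b n)) (g := hs (b+a) n) (fun w => ?_) x
  simp only [AddMonoidHom.comp_apply]
  rw [hs_mon, hs_cons, hs_mon]
  simp [Fin.tail_cons, add_assoc]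

lemma hs_consHom (a : ℤ) (n : ℕ) (y : ℤ × S) (x : CR (ℤ × S) n) :
    hs a n (consHom y n x) = consHom (y.1 + a, y.2) n x := by
  refine hom_ext_apply (f := (hs a n).comp (consHom y n)) (g := consHom (y.1+a, y.2) n)
    (fun w => ?_) x
  simp only [AddMonoidHom.comp_apply]
  rw [consHom_mon, hs_cons, consHom_mon]

/-! ### Multiplication by a chain of letters -/

/-- `MC n z` prepends the "element of ℤX" `z` to a chain. -/
def MC (n : ℕ) : ((ℤ × S) →₀ ℤ) →+ (CR (ℤ × S) n →+ CR (ℤ × S) (n+1)) :=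
  Finsupp.liftAddHom fun y => zmultiplesHom _ (consHom y n)

lemma MC_single (y : ℤ × S) (n : ℕ) : MC n (Finsupp.single y 1) = consHom y n := by
  simp [MC, Finsupp.liftAddHom_apply_single]

lemma MC_single_apply (y : ℤ × S) (n : ℕ) (x : CR (ℤ × S) n) :
    MC n (Finsupp.single y 1) x = consHom y n x := by rw [MC_single]

/-- Embedding `ℤ[ℤ] → ℤ[ℤ×S]`, `a ↦ (a, s₀)`. -/
def Em (s₀ : S) : (ℤ →₀ ℤ) →+ ((ℤ × S) →₀ ℤ) :=
  Finsupp.mapDomain.addMonoidHom (fun a => (a, s₀))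

lemma Em_single (s₀ : S) (a : ℤ) (k : ℤ) :
    Em s₀ (Finsupp.single a k) = Finsupp.single (a, s₀) k := by
  rw [Em, Finsupp.mapDomain.addMonoidHom_apply, Finsupp.mapDomain_single]

/-- Shift on `ℤ[ℤ]`. -/
def shz (a : ℤ) : (ℤ →₀ ℤ) →+ (ℤ →₀ ℤ) := Finsupp.mapDomain.addMonoidHom (· + a)

lemma shz_single (a b k : ℤ) : shz a (Finsupp.single b k) = Finsupp.single (b + a) k := by
  rw [shz, Finsupp.mapDomain.addMonoidHom_apply, Finsupp.mapDomain_single]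

/-- Shift on `ℤ[ℤ×S]`. -/
def shX (a : ℤ) : ((ℤ × S) →₀ ℤ) →+ ((ℤ × S) →₀ ℤ) :=
  Finsupp.mapDomain.addMonoidHom (fun y => (y.1 + a, y.2))

lemma shX_single (a : ℤ) (y : ℤ × S) (k : ℤ) :
    shX a (Finsupp.single y k) = Finsupp.single (y.1 + a, y.2) k := by
  rw [shX, Finsupp.mapDomain.addMonoidHom_apply, Finsupp.mapDomain_single]

lemma shX_Em (s₀ : S) (a : ℤ) (z : ℤ →₀ ℤ) : shX a (Em s₀ z) = Em s₀ (shz a z) := by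
  induction z using Finsupp.induction_linear with
  | zero => simp
  | add f g hf hg => simp [map_add, hf, hg]
  | single b k => rw [Em_single, shX_single, shz_single, Em_single]

lemma hs_MC (a : ℤ) (n : ℕ) (z : (ℤ × S) →₀ ℤ) (x : CR (ℤ × S) n) :
    hs a n (MC n z x) = MC n (shX a z) x := by
  induction z using Finsupp.induction_linear with
  | zero => simp
  | add f g hf hg => simp [map_add, AddMonoidHom.add_apply, hf, hg]
  | single y k =>
    have h1 : (Finsupp.single y k : (ℤ×S) →₀ ℤ) = k • Finsupp.single y 1 := by
      rw [Finsupp.smul_single, smul_eq_mul, mul_one]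
    rw [shX_single]
    have h2 : (Finsupp.single ((y.1+a, y.2) : ℤ × S) k) = k • Finsupp.single ((y.1+a,y.2) : ℤ × S) 1 := by
      rw [Finsupp.smul_single, smul_eq_mul, mul_one]
    rw [h1, h2, map_zsmul, map_zsmul, AddMonoidHom.smul_apply, AddMonoidHom.smul_apply,
      MC_single, MC_single, map_zsmul, hs_consHom]

/-- helper: integer-coefficient single as smul. -/
lemma sing_smul {α : Type} (a : α) (k : ℤ) :
    (Finsupp.single a k : α →₀ ℤ) = k • Finsupp.single a 1 := by
  rw [Finsupp.smul_single, smul_eq_mul, mul_one]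

/-! ### The two model differentials -/

/-- `Dp`: the "difference coordinate" differential (no condition on letters). -/
def Dp : (n : ℕ) → CR (ℤ × S) (n+1) →+ CR (ℤ × S) n
  | 0 => 0
  | (n+1) => Finsupp.liftAddHom fun w => zmultiplesHom _
      (hs (w 0).1 n (mon (Fin.tail w)) - hs ((w 0).1 + 1) n (mon (Fin.tail w))
        - consHom (w 0) n (Dp n (mon (Fin.tail w))))

/-- `Dm`: the final model differential (first letter acts only if its `S`-part is `s₀`). -/
def Dm (s₀ : S) : (n : ℕ) → CR (ℤ × S) (n+1) →+ CR (ℤ × S) n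
  | 0 => 0
  | (n+1) => Finsupp.liftAddHom fun w => zmultiplesHom _
      ((if (w 0).2 = s₀ then hs (w 0).1 n (mon (Fin.tail w)) - hs ((w 0).1 + 1) n (mon (Fin.tail w)) else 0)
        - consHom (w 0) n (Dm s₀ n (mon (Fin.tail w))))

lemma Dp_cons (n : ℕ) (y : ℤ × S) (v : Fin (n+1) → ℤ × S) :
    Dp (n+1) (mon (Fin.cons y v)) =
      hs y.1 n (mon v) - hs (y.1 + 1) n (mon v) - consHom y n (Dp n (mon v)) := by
  show Finsupp.liftAddHom _ (Finsupp.single _ 1) = _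
  rw [Finsupp.liftAddHom_apply_single]
  simp [Fin.tail_cons]

lemma Dm_cons (s₀ : S) (n : ℕ) (y : ℤ × S) (v : Fin (n+1) → ℤ × S) :
    Dm s₀ (n+1) (mon (Fin.cons y v)) =
      (if y.2 = s₀ then hs y.1 n (mon v) - hs (y.1 + 1) n (mon v) else 0)
        - consHom y n (Dm s₀ n (mon v)) := by
  show Finsupp.liftAddHom _ (Finsupp.single _ 1) = _
  rw [Finsupp.liftAddHom_apply_single]
  simp [Fin.tail_cons]

lemma Dp_consHom (n : ℕ) (y : ℤ × S) (x : CR (ℤ × S) (n+1)) :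
    Dp (n+1) (consHom y (n+1) x) =
      hs y.1 n x - hs (y.1 + 1) n x - consHom y n (Dp n x) := by
  refine hom_ext_apply (f := (Dp (n+1)).comp (consHom y (n+1)))
    (g := hs y.1 n - hs (y.1+1) n - (consHom y n).comp (Dp n)) (fun w => ?_) x
  simp only [AddMonoidHom.comp_apply, AddMonoidHom.sub_apply]
  rw [consHom_mon, Dp_cons]

lemma Dm_consHom (s₀ : S) (n : ℕ) (y : ℤ × S) (x : CR (ℤ × S) (n+1)) :
    Dm s₀ (n+1) (consHom y (n+1) x) =
      (if y.2 = s₀ then hs y.1 n x - hs (y.1 + 1) n x else 0) - consHom y n (Dm s₀ n x) := by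
  by_cases h : y.2 = s₀
  · rw [if_pos h]
    have := hom_ext_apply (f := (Dm s₀ (n+1)).comp (consHom y (n+1)))
      (g := hs y.1 n - hs (y.1+1) n - (consHom y n).comp (Dm s₀ n)) (fun w => by
        simp only [AddMonoidHom.comp_apply, AddMonoidHom.sub_apply]
        rw [consHom_mon, Dm_cons, if_pos h]) x
    simpa using this
  · rw [if_neg h, zero_sub]
    have := hom_ext_apply (f := (Dm s₀ (n+1)).comp (consHom y (n+1)))
      (g := -(consHom y n).comp (Dm s₀ n)) (fun w => by
        simp only [AddMonoidHom.comp_apply, AddMonoidHom.neg_apply]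
        rw [consHom_mon, Dm_cons, if_neg h, zero_sub]) x
    simpa using this

/-! ### The "first-letter merge" operators -/

def TDp (n : ℕ) : ((ℤ × S) →₀ ℤ) →+ (CR (ℤ × S) (n+1) →+ CR (ℤ × S) (n+1)) :=
  Finsupp.liftAddHom fun y => zmultiplesHom _ (hs y.1 n - hs (y.1 + 1) n)

def TDm (s₀ : S) (n : ℕ) : ((ℤ × S) →₀ ℤ) →+ (CR (ℤ × S) (n+1) →+ CR (ℤ × S) (n+1)) :=
  Finsupp.liftAddHom fun y =>
    zmultiplesHom _ (if y.2 = s₀ then hs y.1 n - hs (y.1 + 1) n else 0)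

lemma TDp_single (n : ℕ) (y : ℤ × S) :
    TDp n (Finsupp.single y 1) = hs y.1 n - hs (y.1 + 1) n := by
  simp [TDp, Finsupp.liftAddHom_apply_single]

lemma TDm_single (s₀ : S) (n : ℕ) (y : ℤ × S) :
    TDm s₀ n (Finsupp.single y 1) = (if y.2 = s₀ then hs y.1 n - hs (y.1 + 1) n else 0) := by
  simp [TDm, Finsupp.liftAddHom_apply_single]

lemma Dp_MC (n : ℕ) (z : (ℤ × S) →₀ ℤ) (x : CR (ℤ × S) (n+1)) :
    Dp (n+1) (MC (n+1) z x) = TDp n z x - MC n z (Dp n x) := by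
  induction z using Finsupp.induction_linear with
  | zero => simp
  | add f g hf hg =>
    simp only [map_add, AddMonoidHom.add_apply] at *
    rw [hf, hg]; abel
  | single y k =>
    rw [sing_smul, map_zsmul, map_zsmul, map_zsmul, AddMonoidHom.smul_apply,
      AddMonoidHom.smul_apply, AddMonoidHom.smul_apply, MC_single, MC_single, TDp_single,
      map_zsmul, Dp_consHom, AddMonoidHom.sub_apply]
    simp only [smul_sub]

lemma Dm_MC (s₀ : S) (n : ℕ) (z : (ℤ × S) →₀ ℤ) (x : CR (ℤ × S) (n+1)) :
    Dm s₀ (n+1) (MC (n+1) z x) = TDm s₀ n z x - MC n z (Dm s₀ n x) := by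
  induction z using Finsupp.induction_linear with
  | zero => simp
  | add f g hf hg =>
    simp only [map_add, AddMonoidHom.add_apply] at *
    rw [hf, hg]; abel
  | single y k =>
    rw [sing_smul, map_zsmul, map_zsmul, map_zsmul, AddMonoidHom.smul_apply,
      AddMonoidHom.smul_apply, AddMonoidHom.smul_apply, MC_single, MC_single, TDm_single,
      map_zsmul, Dm_consHom]
    by_cases h : y.2 = s₀ <;>
      simp only [h, if_pos, if_neg, if_true, if_false, AddMonoidHom.sub_apply,
        AddMonoidHom.zero_apply, smul_sub, smul_zero, zero_sub, smul_neg]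

/-! ### The geometric series `σ` -/

/-- `sig c` is the Laurent-polynomial `(u^c - 1)/(1-u)`. -/
def sig (c : ℤ) : ℤ →₀ ℤ :=
  (∑ j ∈ Finset.range (-c).toNat, Finsupp.single (c + j) 1)
    - (∑ j ∈ Finset.range c.toNat, Finsupp.single (j : ℤ) 1)

lemma sig_zero : sig 0 = 0 := by simp [sig]

lemma sig_succ (c : ℤ) : sig (c + 1) = sig c - Finsupp.single c 1 := by
  rcases le_or_gt 0 c with h | h
  · have h2 : (-c).toNat = 0 := by omega
    have h3 : (-(c+1)).toNat = 0 := by omega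
    have h4 : (c+1).toNat = c.toNat + 1 := by omega
    rw [sig, sig, h2, h3, h4, Finset.sum_range_succ]
    have h5 : ((c.toNat : ℕ) : ℤ) = c := by omega
    rw [h5]
    simp only [Finset.range_zero, Finset.sum_empty, zero_sub]
    abel
  · have h1 : (c+1).toNat = 0 := by omega
    have h2 : c.toNat = 0 := by omega
    have h3 : (-c).toNat = (-(c+1)).toNat + 1 := by omega
    rw [sig, sig, h1, h2, h3, Finset.sum_range_succ']
    simp only [Finset.range_zero, Finset.sum_empty, sub_zero, Nat.cast_zero, add_zero,
      Nat.cast_add, Nat.cast_one]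
    have h5 : (∑ j ∈ Finset.range (-(c+1)).toNat, Finsupp.single (c + ((j:ℤ) + 1)) (1:ℤ))
        = ∑ j ∈ Finset.range (-(c+1)).toNat, Finsupp.single ((c + 1) + (j:ℤ)) 1 := by
      refine Finset.sum_congr rfl (fun j _ => ?_)
      have h4 : c + ((j:ℤ) + 1) = (c + 1) + j := by ring
      rw [h4]
    rw [h5, add_sub_cancel_right]

lemma sig_pred (c : ℤ) : sig (c - 1) = sig c + Finsupp.single (c - 1) 1 := by
  have := sig_succ (c - 1)
  rw [sub_add_cancel] at this
  rw [this]; abel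

lemma sig_add (a c : ℤ) : sig (a + c) = sig a + shz a (sig c) := by
  induction c using Int.induction_on with
  | zero => rw [sig_zero, map_zero, add_zero, add_zero]
  | succ k ih =>
    have : a + ((k : ℤ) + 1) = (a + k) + 1 := by ring
    rw [this, sig_succ, ih, sig_succ, map_sub, shz_single]
    have : (k : ℤ) + a = a + k := by ring
    rw [this]; abel
  | pred k ih =>
    have h1 : a + (-(k:ℤ) - 1) = (a + -(k:ℤ)) - 1 := by ring
    rw [h1, sig_pred, ih, sig_pred, map_add, shz_single]
    have : -(k:ℤ) - 1 + a = a + -(k:ℤ) - 1 := by ring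
    rw [this]; abel

lemma TDm_Em_single (s₀ : S) (n : ℕ) (a : ℤ) :
    TDm s₀ n (Em s₀ (Finsupp.single a 1)) = hs a n - hs (a + 1) n := by
  rw [Em_single, TDm_single]; simp

/-- Key telescoping: `TDm (Em (sig c)) = hs c - 1`. -/
lemma TDE_sig (s₀ : S) (n : ℕ) (c : ℤ) (x : CR (ℤ × S) (n+1)) :
    TDm s₀ n (Em s₀ (sig c)) x = hs c n x - x := by
  induction c using Int.induction_on with
  | zero => rw [sig_zero, map_zero, map_zero, AddMonoidHom.zero_apply, hs_zero_apply, sub_self]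
  | succ k ih =>
    rw [sig_succ, map_sub, map_sub, AddMonoidHom.sub_apply, ih, TDm_Em_single,
      AddMonoidHom.sub_apply]
    abel
  | pred k ih =>
    rw [sig_pred, map_add, map_add, AddMonoidHom.add_apply, ih, TDm_Em_single,
      AddMonoidHom.sub_apply]
    have h : -(k:ℤ) - 1 + 1 = -(k:ℤ) := by ring
    rw [h]
    abel

/-! ### Zero-level equation lemmas -/

lemma Dm_zero_eq (s₀ : S) : Dm s₀ 0 = 0 := rfl
lemma Dp_zero_eq : (Dp 0 : CR (ℤ × S) 1 →+ CR (ℤ × S) 0) = 0 := rfl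

/-! ### The contraction operators -/

/-- `S1`: contraction acting on the first segment. -/
def S1 (s₀ : S) : (n : ℕ) → CR (ℤ × S) n →+ CR (ℤ × S) (n+1)
  | 0 => 0
  | (n+1) => Finsupp.liftAddHom fun w => zmultiplesHom _
      (if (w 0).2 = s₀ ∧ n ≠ 0 then - consHom (w 0) (n+1) (S1 s₀ n (mon (Fin.tail w)))
       else MC (n+1) (Em s₀ (sig (w 0).1)) (mon (Fin.cons (((0:ℤ), (w 0).2)) (Fin.tail w))))

/-- `Pi1`: projection onto first-segment-normal chains. -/
def Pi1 (s₀ : S) : (n : ℕ) → CR (ℤ × S) n →+ CR (ℤ × S) n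
  | 0 => AddMonoidHom.id _
  | (n+1) => Finsupp.liftAddHom fun w => zmultiplesHom _
      (if (w 0).2 = s₀ ∧ n ≠ 0 then 0 else mon (Fin.cons (((0:ℤ), (w 0).2)) (Fin.tail w)))

/-- `Hm`: the full contraction homotopy. -/
def Hm (s₀ : S) : (n : ℕ) → CR (ℤ × S) n →+ CR (ℤ × S) (n+1)
  | 0 => 0
  | (n+1) => Finsupp.liftAddHom fun w => zmultiplesHom _
      (S1 s₀ (n+1) (mon w) -
        if (w 0).2 = s₀ then 0
        else consHom (((0:ℤ), (w 0).2)) (n+1) (Hm s₀ n (mon (Fin.tail w))))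

/-- `Pim`: projection onto normal chains. -/
def Pim (s₀ : S) : (n : ℕ) → CR (ℤ × S) n →+ CR (ℤ × S) n
  | 0 => AddMonoidHom.id _
  | (n+1) => Finsupp.liftAddHom fun w => zmultiplesHom _
      (if (w 0).2 = s₀ ∧ n ≠ 0 then 0
       else consHom (((0:ℤ), (w 0).2)) n (Pim s₀ n (mon (Fin.tail w))))

lemma S1_zero_eq (s₀ : S) : S1 s₀ 0 = 0 := rfl
lemma Hm_zero_eq (s₀ : S) : Hm s₀ 0 = 0 := rfl
lemma Pi1_zero_eq (s₀ : S) : Pi1 s₀ 0 = AddMonoidHom.id _ := rfl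
lemma Pim_zero_eq (s₀ : S) : Pim s₀ 0 = AddMonoidHom.id _ := rfl

/-! ### cons-computation lemmas -/

lemma S1_cons (s₀ : S) (n : ℕ) (y : ℤ × S) (v : Fin n → ℤ × S) :
    S1 s₀ (n+1) (mon (Fin.cons y v)) =
      (if y.2 = s₀ ∧ n ≠ 0 then - consHom y (n+1) (S1 s₀ n (mon v))
       else MC (n+1) (Em s₀ (sig y.1)) (mon (Fin.cons ((0:ℤ), y.2) v))) := by
  show Finsupp.liftAddHom _ (Finsupp.single _ 1) = _
  rw [Finsupp.liftAddHom_apply_single]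
  simp [Fin.tail_cons]

lemma Pi1_cons (s₀ : S) (n : ℕ) (y : ℤ × S) (v : Fin n → ℤ × S) :
    Pi1 s₀ (n+1) (mon (Fin.cons y v)) =
      (if y.2 = s₀ ∧ n ≠ 0 then 0 else mon (Fin.cons ((0:ℤ), y.2) v)) := by
  show Finsupp.liftAddHom _ (Finsupp.single _ 1) = _
  rw [Finsupp.liftAddHom_apply_single]
  simp [Fin.tail_cons]

lemma Hm_cons (s₀ : S) (n : ℕ) (y : ℤ × S) (v : Fin n → ℤ × S) :
    Hm s₀ (n+1) (mon (Fin.cons y v)) =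
      S1 s₀ (n+1) (mon (Fin.cons y v)) -
        (if y.2 = s₀ then 0 else consHom ((0:ℤ), y.2) (n+1) (Hm s₀ n (mon v))) := by
  show Finsupp.liftAddHom _ (Finsupp.single _ 1) = _
  rw [Finsupp.liftAddHom_apply_single]
  simp [Fin.tail_cons]

lemma Pim_cons (s₀ : S) (n : ℕ) (y : ℤ × S) (v : Fin n → ℤ × S) :
    Pim s₀ (n+1) (mon (Fin.cons y v)) =
      (if y.2 = s₀ ∧ n ≠ 0 then 0 else consHom ((0:ℤ), y.2) n (Pim s₀ n (mon v))) := by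
  show Finsupp.liftAddHom _ (Finsupp.single _ 1) = _
  rw [Finsupp.liftAddHom_apply_single]
  simp [Fin.tail_cons]

/-! ### consHom-level lemmas -/

lemma S1_consHom_K (s₀ : S) (n : ℕ) (y : ℤ × S) (hc : ¬(y.2 = s₀ ∧ n ≠ 0))
    (x : CR (ℤ × S) n) :
    S1 s₀ (n+1) (consHom y n x) = MC (n+1) (Em s₀ (sig y.1)) (consHom ((0:ℤ), y.2) n x) := by
  refine hom_ext_apply (f := (S1 s₀ (n+1)).comp (consHom y n))
    (g := (MC (n+1) (Em s₀ (sig y.1))).comp (consHom ((0:ℤ), y.2) n)) (fun w => ?_) x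
  simp only [AddMonoidHom.comp_apply]
  rw [consHom_mon, S1_cons, if_neg hc, consHom_mon]

lemma S1_consHom_E (s₀ : S) (n : ℕ) (y : ℤ × S) (h1 : y.2 = s₀) (h2 : n ≠ 0)
    (x : CR (ℤ × S) n) :
    S1 s₀ (n+1) (consHom y n x) = - consHom y (n+1) (S1 s₀ n x) := by
  refine hom_ext_apply (f := (S1 s₀ (n+1)).comp (consHom y n))
    (g := -(consHom y (n+1)).comp (S1 s₀ n)) (fun w => ?_) x
  simp only [AddMonoidHom.comp_apply, AddMonoidHom.neg_apply]
  rw [consHom_mon, S1_cons, if_pos ⟨h1, h2⟩]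

lemma Hm_consHom_E (s₀ : S) (n : ℕ) (y : ℤ × S) (h : y.2 = s₀) (x : CR (ℤ × S) n) :
    Hm s₀ (n+1) (consHom y n x) = S1 s₀ (n+1) (consHom y n x) := by
  refine hom_ext_apply (f := (Hm s₀ (n+1)).comp (consHom y n))
    (g := (S1 s₀ (n+1)).comp (consHom y n)) (fun w => ?_) x
  simp only [AddMonoidHom.comp_apply]
  rw [consHom_mon, Hm_cons, if_pos h, sub_zero]

lemma Hm_consHom_K (s₀ : S) (n : ℕ) (y : ℤ × S) (h : ¬(y.2 = s₀)) (x : CR (ℤ × S) n) :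
    Hm s₀ (n+1) (consHom y n x) =
      S1 s₀ (n+1) (consHom y n x) - consHom ((0:ℤ), y.2) (n+1) (Hm s₀ n x) := by
  refine hom_ext_apply (f := (Hm s₀ (n+1)).comp (consHom y n))
    (g := (S1 s₀ (n+1)).comp (consHom y n)
      - (consHom ((0:ℤ), y.2) (n+1)).comp (Hm s₀ n)) (fun w => ?_) x
  simp only [AddMonoidHom.comp_apply, AddMonoidHom.sub_apply]
  rw [consHom_mon, Hm_cons, if_neg h]

lemma Pim_consHom_K (s₀ : S) (n : ℕ) (y : ℤ × S) (hc : ¬(y.2 = s₀ ∧ n ≠ 0))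
    (x : CR (ℤ × S) n) :
    Pim s₀ (n+1) (consHom y n x) = consHom ((0:ℤ), y.2) n (Pim s₀ n x) := by
  refine hom_ext_apply (f := (Pim s₀ (n+1)).comp (consHom y n))
    (g := (consHom ((0:ℤ), y.2) n).comp (Pim s₀ n)) (fun w => ?_) x
  simp only [AddMonoidHom.comp_apply]
  rw [consHom_mon, Pim_cons, if_neg hc]

/-! ### The commutation lemma for `S1` and head shifts -/

lemma CommS1 (s₀ : S) (n : ℕ) (a : ℤ) (x : CR (ℤ × S) (n+1)) :
    S1 s₀ (n+1) (hs a n x)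
      = hs a (n+1) (S1 s₀ (n+1) x) + MC (n+1) (Em s₀ (sig a)) (Pi1 s₀ (n+1) x) := by
  refine Eq.trans (hom_ext_apply (f := (S1 s₀ (n+1)).comp (hs a n))
    (g := (hs a (n+1)).comp (S1 s₀ (n+1)) + (MC (n+1) (Em s₀ (sig a))).comp (Pi1 s₀ (n+1)))
    (fun w => ?_) x) (by simp)
  simp only [AddMonoidHom.comp_apply, AddMonoidHom.add_apply]
  rw [← Fin.cons_self_tail w]
  set y := w 0 with hy
  set v := Fin.tail w with hv
  rw [hs_cons, S1_cons, S1_cons, Pi1_cons]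
  by_cases hc : y.2 = s₀ ∧ n ≠ 0
  · have hc' : ((y.1 + a, y.2) : ℤ × S).2 = s₀ ∧ n ≠ 0 := ⟨hc.1, hc.2⟩
    rw [if_pos hc, if_pos hc', if_pos hc, map_zero, add_zero, map_neg, hs_consHom]
  · have hc' : ¬(((y.1 + a, y.2) : ℤ × S).2 = s₀ ∧ n ≠ 0) := hc
    rw [if_neg hc, if_neg hc', if_neg hc]
    rw [hs_MC, shX_Em]
    have h1 : shz a (sig y.1) + sig a = sig (y.1 + a) := by
      rw [add_comm y.1 a, sig_add a y.1]; abel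
    rw [← h1, map_add, map_add, AddMonoidHom.add_apply]

/-! ### `Hm - S1` ignores head shifts -/

lemma HmS1_hs (s₀ : S) (n : ℕ) (a : ℤ) (x : CR (ℤ × S) (n+1)) :
    Hm s₀ (n+1) (hs a n x) - S1 s₀ (n+1) (hs a n x)
      = Hm s₀ (n+1) x - S1 s₀ (n+1) x := by
  refine hom_ext_apply
    (f := (Hm s₀ (n+1)).comp (hs a n) - (S1 s₀ (n+1)).comp (hs a n))
    (g := Hm s₀ (n+1) - S1 s₀ (n+1)) (fun w => ?_) x
  simp only [AddMonoidHom.comp_apply, AddMonoidHom.sub_apply]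
  rw [← Fin.cons_self_tail w]
  rw [hs_cons, Hm_cons, Hm_cons]
  simp only []
  abel

/-! ### The homotopy identity for `S1` -/

lemma Ls1 (s₀ : S) : ∀ (n : ℕ) (x : CR (ℤ × S) (n+1)),
    Dm s₀ (n+1) (S1 s₀ (n+1) x) + S1 s₀ n (Dm s₀ n x) = x - Pi1 s₀ (n+1) x := by
  intro n
  induction n with
  | zero =>
    intro x
    refine hom_ext_apply
      (f := (Dm s₀ 1).comp (S1 s₀ 1) + (S1 s₀ 0).comp (Dm s₀ 0))
      (g := AddMonoidHom.id _ - Pi1 s₀ 1) (fun w => ?_) x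
    simp only [AddMonoidHom.comp_apply, AddMonoidHom.add_apply, AddMonoidHom.sub_apply,
      AddMonoidHom.id_apply, S1_zero_eq, Dm_zero_eq, AddMonoidHom.zero_apply, map_zero,
      add_zero]
    rw [← Fin.cons_self_tail w]
    set y := w 0 with hy
    set v := Fin.tail w with hv
    rw [S1_cons, Pi1_cons]
    have hc : ¬(y.2 = s₀ ∧ (0:ℕ) ≠ 0) := by simp
    rw [if_neg hc, if_neg hc, Dm_MC, TDE_sig, hs_cons]
    rw [Dm_zero_eq]
    simp only [AddMonoidHom.zero_apply, map_zero, sub_zero, zero_add, Prod.mk.eta]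
  | succ n ih =>
    intro x
    refine hom_ext_apply
      (f := (Dm s₀ (n+2)).comp (S1 s₀ (n+2)) + (S1 s₀ (n+1)).comp (Dm s₀ (n+1)))
      (g := AddMonoidHom.id _ - Pi1 s₀ (n+2)) (fun w => ?_) x
    simp only [AddMonoidHom.comp_apply, AddMonoidHom.add_apply, AddMonoidHom.sub_apply,
      AddMonoidHom.id_apply]
    rw [← Fin.cons_self_tail w]
    set y := w 0 with hy
    set v := Fin.tail w with hv
    by_cases h : y.2 = s₀
    · -- E-head case
      set Z := S1 s₀ (n+1) (mon v) with hZ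
      have hA : Dm s₀ (n+2) (S1 s₀ (n+2) (mon (Fin.cons y v)))
          = - hs y.1 (n+1) Z + hs (y.1+1) (n+1) Z
            + consHom y (n+1) (mon v - Pi1 s₀ (n+1) (mon v) - S1 s₀ n (Dm s₀ n (mon v))) := by
        rw [S1_cons, if_pos ⟨h, Nat.succ_ne_zero n⟩, map_neg, Dm_consHom, if_pos h]
        have hD : Dm s₀ (n+1) Z
            = mon v - Pi1 s₀ (n+1) (mon v) - S1 s₀ n (Dm s₀ n (mon v)) := by
          exact eq_sub_of_add_eq (ih (mon v))
        rw [hD]; abel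
      have hEcons : S1 s₀ (n+1) (consHom y n (Dm s₀ n (mon v)))
          = - consHom y (n+1) (S1 s₀ n (Dm s₀ n (mon v))) := by
        rcases n with _ | m
        · rw [Dm_zero_eq]
          simp only [AddMonoidHom.zero_apply, map_zero, neg_zero, S1_zero_eq]
        · exact S1_consHom_E s₀ (m+1) y h (Nat.succ_ne_zero m) _
      have hB : S1 s₀ (n+1) (Dm s₀ (n+1) (mon (Fin.cons y v)))
          = hs y.1 (n+1) Z + MC (n+1) (Em s₀ (sig y.1)) (Pi1 s₀ (n+1) (mon v))
            - hs (y.1+1) (n+1) Z - MC (n+1) (Em s₀ (sig (y.1+1))) (Pi1 s₀ (n+1) (mon v))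
            + consHom y (n+1) (S1 s₀ n (Dm s₀ n (mon v))) := by
        rw [Dm_cons s₀ n y v, if_pos h, map_sub, map_sub, CommS1, CommS1, hEcons]
        abel
      rw [hA, hB]
      have hMC : MC (n+1) (Em s₀ (sig y.1)) (Pi1 s₀ (n+1) (mon v))
          = consHom y (n+1) (Pi1 s₀ (n+1) (mon v))
            + MC (n+1) (Em s₀ (sig (y.1+1))) (Pi1 s₀ (n+1) (mon v)) := by
        rw [sig_succ, map_sub, map_sub, AddMonoidHom.sub_apply, Em_single, MC_single]
        have hy2 : ((y.1, s₀) : ℤ × S) = y := by rw [← h]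
        rw [hy2]; abel
      rw [hMC]
      rw [Pi1_cons, if_pos ⟨h, Nat.succ_ne_zero n⟩, sub_zero, ← consHom_mon]
      simp only [map_sub]
      abel
    · -- K-head case
      have hc : ¬(y.2 = s₀ ∧ (n+1) ≠ 0) := fun hh => h hh.1
      have hc0 : ¬(y.2 = s₀ ∧ n ≠ 0) := fun hh => h hh.1
      have h02 : (((0:ℤ), y.2) : ℤ × S).2 = s₀ → False := h
      rw [S1_cons, if_neg hc, Dm_MC, TDE_sig]
      rw [hs_cons]
      simp only [zero_add, Prod.mk.eta]
      rw [Dm_cons s₀ n ((0:ℤ), y.2) v]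
      rw [if_neg h02]
      rw [zero_sub, map_neg]
      rw [Dm_cons s₀ n y v, if_neg h, zero_sub, map_neg, S1_consHom_K s₀ n y hc0]
      rw [Pi1_cons, if_neg hc]
      abel

/-! ### The main homotopy identity -/

lemma Lh (s₀ : S) : ∀ (n : ℕ) (x : CR (ℤ × S) (n+1)),
    Dm s₀ (n+1) (Hm s₀ (n+1) x) + Hm s₀ n (Dm s₀ n x) = x - Pim s₀ (n+1) x := by
  intro n
  induction n with
  | zero =>
    intro x
    refine hom_ext_apply
      (f := (Dm s₀ 1).comp (Hm s₀ 1) + (Hm s₀ 0).comp (Dm s₀ 0))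
      (g := AddMonoidHom.id _ - Pim s₀ 1) (fun w => ?_) x
    simp only [AddMonoidHom.comp_apply, AddMonoidHom.add_apply, AddMonoidHom.sub_apply,
      AddMonoidHom.id_apply, Hm_zero_eq, Dm_zero_eq, AddMonoidHom.zero_apply, map_zero,
      add_zero]
    rw [← Fin.cons_self_tail w]
    set y := w 0 with hy
    set v := Fin.tail w with hv
    have hH : Hm s₀ 1 (mon (Fin.cons y v)) = S1 s₀ 1 (mon (Fin.cons y v)) := by
      rw [Hm_cons, Hm_zero_eq]
      simp only [AddMonoidHom.zero_apply, map_zero, ite_self, sub_zero]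
    rw [hH]
    have h0 := Ls1 s₀ 0 (mon (Fin.cons y v))
    rw [S1_zero_eq] at h0
    simp only [AddMonoidHom.zero_apply, add_zero] at h0
    rw [h0, Pim_cons, Pi1_cons]
    have hc : ¬(y.2 = s₀ ∧ (0:ℕ) ≠ 0) := by simp
    rw [if_neg hc, if_neg hc, Pim_zero_eq]
    simp only [AddMonoidHom.id_apply]
    rw [consHom_mon]
  | succ n ih =>
    intro x
    refine hom_ext_apply
      (f := (Dm s₀ (n+2)).comp (Hm s₀ (n+2)) + (Hm s₀ (n+1)).comp (Dm s₀ (n+1)))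
      (g := AddMonoidHom.id _ - Pim s₀ (n+2)) (fun w => ?_) x
    simp only [AddMonoidHom.comp_apply, AddMonoidHom.add_apply, AddMonoidHom.sub_apply,
      AddMonoidHom.id_apply]
    rw [← Fin.cons_self_tail w]
    set y := w 0 with hy
    set v := Fin.tail w with hv
    by_cases h : y.2 = s₀
    · -- E-head case
      have hH : Hm s₀ (n+2) (mon (Fin.cons y v)) = S1 s₀ (n+2) (mon (Fin.cons y v)) := by
        rw [Hm_cons, if_pos h, sub_zero]
      have key : Hm s₀ (n+1) (Dm s₀ (n+1) (mon (Fin.cons y v)))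
          - S1 s₀ (n+1) (Dm s₀ (n+1) (mon (Fin.cons y v))) = 0 := by
        rw [Dm_cons s₀ n y v, if_pos h]
        simp only [map_sub]
        have e1 := HmS1_hs s₀ n y.1 (mon v)
        have e2 := HmS1_hs s₀ n (y.1 + 1) (mon v)
        have e3 := Hm_consHom_E s₀ n y h (Dm s₀ n (mon v))
        rw [e3]
        have e4 : Hm s₀ (n+1) (hs y.1 n (mon v))
            = S1 s₀ (n+1) (hs y.1 n (mon v))
              + (Hm s₀ (n+1) (hs (y.1+1) n (mon v)) - S1 s₀ (n+1) (hs (y.1+1) n (mon v))) := by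
          rw [e2, ← e1]; abel
        rw [e4]; abel
      have h5 : Hm s₀ (n+1) (Dm s₀ (n+1) (mon (Fin.cons y v)))
          = S1 s₀ (n+1) (Dm s₀ (n+1) (mon (Fin.cons y v))) := sub_eq_zero.mp key
      rw [hH, h5]
      have hLs := Ls1 s₀ (n+1) (mon (Fin.cons y v))
      rw [Pi1_cons, if_pos ⟨h, Nat.succ_ne_zero n⟩, sub_zero] at hLs
      rw [Pim_cons, if_pos ⟨h, Nat.succ_ne_zero n⟩, sub_zero]
      exact hLs
    · -- K-head case
      have hc : ¬(y.2 = s₀ ∧ (n+1) ≠ 0) := fun hh => h hh.1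
      have hc0 : ¬(y.2 = s₀ ∧ n ≠ 0) := fun hh => h hh.1
      have h02 : ¬((((0:ℤ), y.2) : ℤ × S).2 = s₀) := h
      have h02' : ¬(((((0:ℤ), y.2)) : ℤ × S).2 = s₀ ∧ n ≠ 0) := fun hh => h hh.1
      have hA : Dm s₀ (n+2) (Hm s₀ (n+2) (mon (Fin.cons y v)))
          = mon (Fin.cons y v) - mon (Fin.cons ((0:ℤ), y.2) v)
            + MC (n+1) (Em s₀ (sig y.1)) (consHom ((0:ℤ), y.2) n (Dm s₀ n (mon v)))
            + consHom ((0:ℤ), y.2) (n+1) (Dm s₀ (n+1) (Hm s₀ (n+1) (mon v))) := by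
        rw [Hm_cons, if_neg h, S1_cons, if_neg hc, map_sub]
        rw [Dm_MC, TDE_sig, hs_cons]
        simp only [zero_add, Prod.mk.eta]
        rw [Dm_cons s₀ n ((0:ℤ), y.2) v, if_neg h02, zero_sub, map_neg]
        rw [Dm_consHom s₀ (n+1) ((0:ℤ), y.2), if_neg h02, zero_sub]
        abel
      have hB : Hm s₀ (n+1) (Dm s₀ (n+1) (mon (Fin.cons y v)))
          = - MC (n+1) (Em s₀ (sig y.1)) (consHom ((0:ℤ), y.2) n (Dm s₀ n (mon v)))
            + consHom ((0:ℤ), y.2) (n+1) (Hm s₀ n (Dm s₀ n (mon v))) := by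
        rw [Dm_cons s₀ n y v, if_neg h, zero_sub, map_neg, Hm_consHom_K s₀ n y h,
          S1_consHom_K s₀ n y hc0]
        abel
      rw [hA, hB]
      have hIH := congrArg (consHom ((0:ℤ), y.2) (n+1)) (ih (mon v))
      rw [map_add, map_sub] at hIH
      rw [Pim_cons, if_neg hc]
      have hEq : consHom ((0:ℤ), y.2) (n+1) (Dm s₀ (n+1) (Hm s₀ (n+1) (mon v)))
          = consHom ((0:ℤ), y.2) (n+1) (mon v)
            - consHom ((0:ℤ), y.2) (n+1) (Pim s₀ (n+1) (mon v))
            - consHom ((0:ℤ), y.2) (n+1) (Hm s₀ n (Dm s₀ n (mon v))) := by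
        exact eq_sub_of_add_eq hIH
      rw [hEq, consHom_mon]
      abel

/-! ### Normal forms -/

lemma fext_apply {α G : Type} [AddCommGroup G] {f g : (α →₀ ℤ) →+ G}
    (h : ∀ a, f (Finsupp.single a 1) = g (Finsupp.single a 1)) (x : α →₀ ℤ) : f x = g x := by
  have : f = g := by
    apply Finsupp.addHom_ext
    intro a k
    rw [sing_smul, map_zsmul, map_zsmul, h]
  rw [this]

/-- Normal forms of degree `n+1`. -/
abbrev NT (s₀ : S) (n : ℕ) : Type := (Fin n → {t : S // t ≠ s₀}) × S

/-- The normal word corresponding to a normal form. -/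
def nfw (s₀ : S) (n : ℕ) (q : NT s₀ n) : Fin (n+1) → ℤ × S :=
  fun j => ((0:ℤ), if h : (j : ℕ) < n then (q.1 ⟨j, h⟩ : S) else q.2)

lemma nfw_castSucc (s₀ : S) (n : ℕ) (q : NT s₀ n) (j : Fin n) :
    nfw s₀ n q j.castSucc = ((0:ℤ), (q.1 j : S)) := by
  unfold nfw
  rw [dif_pos (by simpa using j.isLt)]
  have : (⟨((j.castSucc : Fin (n+1)) : ℕ), by simpa using j.isLt⟩ : Fin n) = j :=
    Fin.ext (by simp)
  rw [this]

lemma nfw_last (s₀ : S) (n : ℕ) (q : NT s₀ n) :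
    nfw s₀ n q (Fin.last n) = ((0:ℤ), q.2) := by
  unfold nfw
  rw [dif_neg (by simp)]

/-- Inclusion of normal forms. -/
def im (s₀ : S) (n : ℕ) : (NT s₀ n →₀ ℤ) →+ CR (ℤ × S) (n+1) :=
  Finsupp.liftAddHom fun q => zmultiplesHom _ (mon (nfw s₀ n q))

/-- Projection to normal forms. -/
def pm (s₀ : S) (n : ℕ) : CR (ℤ × S) (n+1) →+ (NT s₀ n →₀ ℤ) :=
  Finsupp.liftAddHom fun w => zmultiplesHom _
    (if h : ∀ j : Fin n, (w j.castSucc).2 ≠ s₀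
     then Finsupp.single ((fun j => ⟨(w j.castSucc).2, h j⟩), (w (Fin.last n)).2) 1
     else 0)

lemma im_single (s₀ : S) (n : ℕ) (q : NT s₀ n) :
    im s₀ n (Finsupp.single q 1) = mon (nfw s₀ n q) := by
  simp [im, Finsupp.liftAddHom_apply_single]

lemma pm_mon (s₀ : S) (n : ℕ) (w : Fin (n+1) → ℤ × S) :
    pm s₀ n (mon w) =
      (if h : ∀ j : Fin n, (w j.castSucc).2 ≠ s₀
       then Finsupp.single ((fun j => ⟨(w j.castSucc).2, h j⟩), (w (Fin.last n)).2) 1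
       else 0) := by
  show Finsupp.liftAddHom _ (Finsupp.single _ 1) = _
  rw [Finsupp.liftAddHom_apply_single]
  simp

/-- `pm` only depends on the `S`-components. -/
lemma pm_snd_congr (s₀ : S) (n : ℕ) (w₁ w₂ : Fin (n+1) → ℤ × S)
    (hw : ∀ j, (w₁ j).2 = (w₂ j).2) : pm s₀ n (mon w₁) = pm s₀ n (mon w₂) := by
  rw [pm_mon, pm_mon]
  by_cases h : ∀ j : Fin n, (w₁ j.castSucc).2 ≠ s₀
  · have h2 : ∀ j : Fin n, (w₂ j.castSucc).2 ≠ s₀ := fun j => (hw j.castSucc) ▸ h j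
    rw [dif_pos h, dif_pos h2]
    congr 1
    refine Prod.ext ?_ ?_
    · funext j
      exact Subtype.ext (hw j.castSucc)
    · exact hw (Fin.last n)
  · have h2 : ¬ ∀ j : Fin n, (w₂ j.castSucc).2 ≠ s₀ := by
      intro h2
      exact h (fun j => (hw j.castSucc) ▸ h2 j)
    rw [dif_neg h, dif_neg h2]

lemma pm_hs (s₀ : S) (n : ℕ) (a : ℤ) (x : CR (ℤ × S) (n+1)) :
    pm s₀ n (hs a n x) = pm s₀ n x := by
  refine hom_ext_apply (f := (pm s₀ n).comp (hs a n)) (g := pm s₀ n) (fun w => ?_) x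
  simp only [AddMonoidHom.comp_apply]
  rw [hs_mon]
  apply pm_snd_congr
  intro j
  induction j using Fin.cases with
  | zero => simp
  | succ k => simp [Fin.tail]

lemma pm_im (s₀ : S) (n : ℕ) (x : NT s₀ n →₀ ℤ) : pm s₀ n (im s₀ n x) = x := by
  refine fext_apply (f := (pm s₀ n).comp (im s₀ n)) (g := AddMonoidHom.id _) (fun q => ?_) x
  simp only [AddMonoidHom.comp_apply, AddMonoidHom.id_apply]
  rw [im_single, pm_mon]
  have hcond : ∀ j : Fin n, ((nfw s₀ n q) j.castSucc).2 ≠ s₀ := by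
    intro j
    rw [nfw_castSucc]
    exact (q.1 j).2
  rw [dif_pos hcond]
  congr 1
  refine Prod.ext ?_ ?_
  · funext j
    refine Subtype.ext ?_
    show ((nfw s₀ n q) j.castSucc).2 = ((q.1 j : S))
    rw [nfw_castSucc]
  · show ((nfw s₀ n q) (Fin.last n)).2 = q.2
    rw [nfw_last]

/-- Normal words are cycles. -/
lemma Dm_nf (s₀ : S) : ∀ (n : ℕ) (w : Fin (n+1) → ℤ × S),
    (∀ j : Fin n, (w j.castSucc).2 ≠ s₀) → Dm s₀ n (mon w) = 0 := by
  intro n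
  induction n with
  | zero => intro w _; rw [Dm_zero_eq]; rfl
  | succ m ih =>
    intro w hcond
    rw [← Fin.cons_self_tail w, Dm_cons]
    have h0 : ¬((w 0).2 = s₀) := by
      have := hcond 0
      simpa using this
    rw [if_neg h0, zero_sub]
    have htail : ∀ j : Fin m, ((Fin.tail w) j.castSucc).2 ≠ s₀ := by
      intro j
      have := hcond j.succ
      rw [← Fin.succ_castSucc] at this
      exact this
    rw [ih (Fin.tail w) htail, map_zero, neg_zero]

lemma Dm_im (s₀ : S) (n : ℕ) (x : NT s₀ n →₀ ℤ) : Dm s₀ n (im s₀ n x) = 0 := by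
  refine fext_apply (f := (Dm s₀ n).comp (im s₀ n)) (g := 0) (fun q => ?_) x
  simp only [AddMonoidHom.comp_apply, AddMonoidHom.zero_apply]
  rw [im_single]
  apply Dm_nf
  intro j
  rw [nfw_castSucc]
  exact (q.1 j).2

/-! ### `pm` on cons words -/

/-- Prepend a letter to a normal form. -/
def prep (s₀ : S) (n : ℕ) (t₀ : {t : S // t ≠ s₀}) : NT s₀ n → NT s₀ (n+1) :=
  fun q => (Fin.cons t₀ q.1, q.2)

lemma pm_consHom_E (s₀ : S) (n : ℕ) (y : ℤ × S) (h : y.2 = s₀) (x : CR (ℤ × S) (n+1)) :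
    pm s₀ (n+1) (consHom y (n+1) x) = 0 := by
  refine hom_ext_apply (f := (pm s₀ (n+1)).comp (consHom y (n+1))) (g := 0) (fun u => ?_) x
  simp only [AddMonoidHom.comp_apply, AddMonoidHom.zero_apply]
  rw [consHom_mon, pm_mon]
  have hcond : ¬ ∀ j : Fin (n+1), ((Fin.cons y u : Fin (n+2) → ℤ × S) j.castSucc).2 ≠ s₀ := by
    intro hcond
    have := hcond 0
    simp only [Fin.castSucc_zero, Fin.cons_zero] at this
    exact this h
  rw [dif_neg hcond]

lemma pm_consHom_K (s₀ : S) (n : ℕ) (y : ℤ × S) (h : ¬(y.2 = s₀)) (x : CR (ℤ × S) (n+1)) :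
    pm s₀ (n+1) (consHom y (n+1) x) =
      Finsupp.mapDomain (prep s₀ n ⟨y.2, h⟩) (pm s₀ n x) := by
  refine hom_ext_apply (f := (pm s₀ (n+1)).comp (consHom y (n+1)))
    (g := (Finsupp.mapDomain.addMonoidHom (prep s₀ n ⟨y.2, h⟩)).comp (pm s₀ n))
    (fun u => ?_) x
  simp only [AddMonoidHom.comp_apply, Finsupp.mapDomain.addMonoidHom_apply]
  rw [consHom_mon, pm_mon, pm_mon]
  by_cases hu : ∀ j : Fin n, (u j.castSucc).2 ≠ s₀
  · have hcons : ∀ j : Fin (n+1), ((Fin.cons y u : Fin (n+2) → ℤ × S) j.castSucc).2 ≠ s₀ := by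
      intro j
      induction j using Fin.cases with
      | zero => simpa using h
      | succ k =>
        rw [← Fin.succ_castSucc, Fin.cons_succ]
        exact hu k
    rw [dif_pos hcons, dif_pos hu, Finsupp.mapDomain_single]
    congr 1
    unfold prep
    refine Prod.ext ?_ ?_
    · funext j
      induction j using Fin.cases with
      | zero =>
        refine Subtype.ext ?_
        simp
      | succ k =>
        refine Subtype.ext ?_
        show ((Fin.cons y u : Fin (n+2) → ℤ × S) (k.succ).castSucc).2
          = (((Fin.cons (⟨y.2, h⟩ : {t : S // t ≠ s₀}) (fun j => ⟨(u j.castSucc).2, hu j⟩) : Fin (n+1) → {t : S // t ≠ s₀})) k.succ : {t : S // t ≠ s₀}).1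
        rw [← Fin.succ_castSucc, Fin.cons_succ, Fin.cons_succ]
    · show ((Fin.cons y u : Fin (n+2) → ℤ × S) (Fin.last (n+1))).2 = (u (Fin.last n)).2
      rw [← Fin.succ_last, Fin.cons_succ]
  · have hcons : ¬ ∀ j : Fin (n+1), ((Fin.cons y u : Fin (n+2) → ℤ × S) j.castSucc).2 ≠ s₀ := by
      intro hcons
      apply hu
      intro k
      have := hcons k.succ
      rwa [← Fin.succ_castSucc, Fin.cons_succ] at this
    rw [dif_neg hcons, dif_neg hu, Finsupp.mapDomain_zero]

lemma prep_fst (s₀ : S) (n : ℕ) (t₀ : {t : S // t ≠ s₀}) (q : NT s₀ n) :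
    (prep s₀ n t₀ q).1 = Fin.cons t₀ q.1 := rfl

lemma prep_snd (s₀ : S) (n : ℕ) (t₀ : {t : S // t ≠ s₀}) (q : NT s₀ n) :
    (prep s₀ n t₀ q).2 = q.2 := rfl

lemma im_prep (s₀ : S) (n : ℕ) (t₀ : {t : S // t ≠ s₀}) (ξ : NT s₀ n →₀ ℤ) :
    im s₀ (n+1) (Finsupp.mapDomain (prep s₀ n t₀) ξ)
      = consHom ((0:ℤ), (t₀ : S)) (n+1) (im s₀ n ξ) := by
  refine fext_apply
    (f := (im s₀ (n+1)).comp (Finsupp.mapDomain.addMonoidHom (prep s₀ n t₀)))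
    (g := (consHom ((0:ℤ), (t₀ : S)) (n+1)).comp (im s₀ n)) (fun q => ?_) ξ
  simp only [AddMonoidHom.comp_apply, Finsupp.mapDomain.addMonoidHom_apply]
  rw [Finsupp.mapDomain_single, im_single, im_single, consHom_mon]
  congr 1
  funext j
  induction j using Fin.cases with
  | zero =>
    rw [Fin.cons_zero]
    unfold nfw
    rw [prep_fst]
    have hpos : ((0 : Fin (n+2)) : ℕ) < n + 1 := by simp
    rw [dif_pos hpos]
    have hidx : (⟨((0 : Fin (n+2)) : ℕ), hpos⟩ : Fin (n+1)) = 0 := Fin.ext (by simp)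
    rw [hidx, Fin.cons_zero]
  | succ k =>
    rw [Fin.cons_succ]
    unfold nfw
    rw [prep_fst]
    by_cases hk : (k : ℕ) < n
    · have hk1 : ((k.succ : Fin (n+2)) : ℕ) < n + 1 := by
        simp only [Fin.val_succ]; omega
      rw [dif_pos hk1, dif_pos hk]
      have hidx : (⟨((k.succ : Fin (n+2)) : ℕ), hk1⟩ : Fin (n+1))
          = (⟨(k:ℕ), hk⟩ : Fin n).succ := Fin.ext (by simp)
      rw [hidx, Fin.cons_succ]
    · have hk1 : ¬ (((k.succ : Fin (n+2)) : ℕ) < n + 1) := by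
        simp only [Fin.val_succ]; omega
      rw [dif_neg hk1, dif_neg hk, prep_snd]

/-! ### `Pim = im ∘ pm` -/

lemma Pim_eq (s₀ : S) : ∀ (n : ℕ) (x : CR (ℤ × S) (n+1)),
    Pim s₀ (n+1) x = im s₀ n (pm s₀ n x) := by
  intro n
  induction n with
  | zero =>
    intro x
    refine hom_ext_apply (f := Pim s₀ 1) (g := (im s₀ 0).comp (pm s₀ 0)) (fun w => ?_) x
    simp only [AddMonoidHom.comp_apply]
    rw [← Fin.cons_self_tail w, Pim_cons]
    have hc : ¬((w 0).2 = s₀ ∧ (0:ℕ) ≠ 0) := by simp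
    rw [if_neg hc, Pim_zero_eq]
    simp only [AddMonoidHom.id_apply]
    rw [consHom_mon, pm_mon]
    have hcond : ∀ j : Fin 0, ((Fin.cons (w 0) (Fin.tail w)) j.castSucc).2 ≠ s₀ := fun j => j.elim0
    rw [dif_pos hcond, im_single]
    congr 1
    funext j
    induction j using Fin.cases with
    | zero =>
      rw [Fin.cons_zero]
      unfold nfw
      rw [dif_neg (by omega)]
      show ((0:ℤ), (w 0).2) = ((0:ℤ), ((Fin.cons (w 0) (Fin.tail w)) (Fin.last 0)).2)
      have : (Fin.last 0 : Fin 1) = 0 := rfl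
      rw [this, Fin.cons_zero]
    | succ k => exact k.elim0
  | succ n ih =>
    intro x
    refine hom_ext_apply (f := Pim s₀ (n+2)) (g := (im s₀ (n+1)).comp (pm s₀ (n+1)))
      (fun w => ?_) x
    simp only [AddMonoidHom.comp_apply]
    rw [← Fin.cons_self_tail w]
    set y := w 0 with hy
    set v := Fin.tail w with hv
    by_cases h : y.2 = s₀
    · rw [Pim_cons, if_pos ⟨h, Nat.succ_ne_zero n⟩]
      rw [← consHom_mon, pm_consHom_E s₀ n y h, map_zero]
    · have hc : ¬(y.2 = s₀ ∧ (n+1) ≠ 0) := fun hh => h hh.1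
      rw [Pim_cons, if_neg hc, ih]
      rw [← consHom_mon, pm_consHom_K s₀ n y h, im_prep]

/-! ### `pm` kills boundaries -/

lemma pm_Dm (s₀ : S) : ∀ (n : ℕ) (x : CR (ℤ × S) (n+2)), pm s₀ n (Dm s₀ (n+1) x) = 0 := by
  intro n
  induction n with
  | zero =>
    intro x
    refine hom_ext_apply (f := (pm s₀ 0).comp (Dm s₀ 1)) (g := 0) (fun w => ?_) x
    simp only [AddMonoidHom.comp_apply, AddMonoidHom.zero_apply]
    rw [← Fin.cons_self_tail w, Dm_cons, map_sub, Dm_zero_eq]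
    simp only [AddMonoidHom.zero_apply, map_zero, sub_zero]
    by_cases h : (w 0).2 = s₀
    · rw [if_pos h, map_sub, pm_hs, pm_hs, sub_self]
    · rw [if_neg h, map_zero]
  | succ n ih =>
    intro x
    refine hom_ext_apply (f := (pm s₀ (n+1)).comp (Dm s₀ (n+2))) (g := 0) (fun w => ?_) x
    simp only [AddMonoidHom.comp_apply, AddMonoidHom.zero_apply]
    rw [← Fin.cons_self_tail w, Dm_cons, map_sub]
    have hcons : pm s₀ (n+1) (consHom (w 0) (n+1) (Dm s₀ (n+1) (mon (Fin.tail w)))) = 0 := by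
      by_cases h : (w 0).2 = s₀
      · rw [pm_consHom_E s₀ n (w 0) h]
      · rw [pm_consHom_K s₀ n (w 0) h, ih, Finsupp.mapDomain_zero]
    rw [hcons, sub_zero]
    by_cases h : (w 0).2 = s₀
    · rw [if_pos h, map_sub, pm_hs, pm_hs, sub_self]
    · rw [if_neg h, map_zero]

/-! ### Difference coordinates -/

def phi : ℤ × S → ℤ × S := fun x => (x.1 + 1, x.2)

def thf : (n : ℕ) → ℤ → (Fin n → ℤ × S) → (Fin n → ℤ × S)
  | 0, _, w => w
  | (n+1), a, w => Fin.cons ((w 0).1 - a, (w 0).2) (thf n (w 0).1 (Fin.tail w))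

def thi : (n : ℕ) → ℤ → (Fin n → ℤ × S) → (Fin n → ℤ × S)
  | 0, _, w => w
  | (n+1), a, w => Fin.cons ((w 0).1 + a, (w 0).2) (thi n ((w 0).1 + a) (Fin.tail w))

lemma thf_cons (n : ℕ) (a : ℤ) (y : ℤ × S) (v : Fin n → ℤ × S) :
    thf (n+1) a (Fin.cons y v) = Fin.cons (y.1 - a, y.2) (thf n y.1 v) := by
  simp only [thf]
  rw [Fin.cons_zero, Fin.tail_cons]

lemma thi_cons (n : ℕ) (a : ℤ) (y : ℤ × S) (v : Fin n → ℤ × S) :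
    thi (n+1) a (Fin.cons y v) = Fin.cons (y.1 + a, y.2) (thi n (y.1 + a) v) := by
  simp only [thi]
  rw [Fin.cons_zero, Fin.tail_cons]

lemma thf_thi : ∀ (n : ℕ) (a : ℤ) (w : Fin n → ℤ × S), thf n a (thi n a w) = w := by
  intro n
  induction n with
  | zero => intro a w; rfl
  | succ n ih =>
    intro a w
    rw [← Fin.cons_self_tail w, thi_cons, thf_cons, ih]
    have h1 : (w 0).1 + a - a = (w 0).1 := by ring
    rw [h1, Prod.mk.eta]

lemma thi_thf : ∀ (n : ℕ) (a : ℤ) (w : Fin n → ℤ × S), thi n a (thf n a w) = w := by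
  intro n
  induction n with
  | zero => intro a w; rfl
  | succ n ih =>
    intro a w
    rw [← Fin.cons_self_tail w, thf_cons, thi_cons]
    have h1 : (w 0).1 - a + a = (w 0).1 := by ring
    rw [h1, ih, Prod.mk.eta]

def thE (n : ℕ) (a : ℤ) : (Fin n → ℤ × S) ≃ (Fin n → ℤ × S) where
  toFun := thf n a
  invFun := thi n a
  left_inv := fun w => thi_thf n a w
  right_inv := fun w => thf_thi n a w

def Th (n : ℕ) (a : ℤ) : CR (ℤ × S) n ≃+ CR (ℤ × S) n := Finsupp.domCongr (thE n a)

lemma Th_mon (n : ℕ) (a : ℤ) (w : Fin n → ℤ × S) : Th n a (mon w) = mon (thf n a w) := by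
  simp [Th, thE, mon, Finsupp.domCongr_apply, Finsupp.equivMapDomain_single]

lemma Th_consHom (n : ℕ) (a : ℤ) (y : ℤ × S) (x : CR (ℤ × S) n) :
    Th (n+1) a (consHom y n x) = consHom (y.1 - a, y.2) n (Th n y.1 x) := by
  refine hom_ext_apply (f := ((Th (n+1) a : CR (ℤ × S) (n+1) ≃+ CR (ℤ × S) (n+1)) :
      CR (ℤ × S) (n+1) →+ CR (ℤ × S) (n+1)).comp (consHom y n))
    (g := (consHom (y.1 - a, y.2) n).comp
      ((Th n y.1 : CR (ℤ × S) n ≃+ CR (ℤ × S) n) : CR (ℤ × S) n →+ CR (ℤ × S) n))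
    (fun u => ?_) x
  simp only [AddMonoidHom.comp_apply, AddMonoidHom.coe_coe]
  rw [consHom_mon, Th_mon, thf_cons, Th_mon, consHom_mon]

lemma comp_cons_phi (n : ℕ) (y : ℤ × S) (v : Fin n → ℤ × S) :
    phi ∘ Fin.cons y v = Fin.cons (phi y) (phi ∘ v) := by
  funext k
  induction k using Fin.cases with
  | zero => rfl
  | succ k => rfl

lemma thf_phi : ∀ (n : ℕ) (b : ℤ) (u : Fin n → ℤ × S), thf n (b+1) (phi ∘ u) = thf n b u := by
  intro n
  induction n with
  | zero =>
    intro b u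
    have : phi ∘ u = u := by funext k; exact k.elim0
    rw [this]
    rfl
  | succ n ih =>
    intro b u
    rw [← Fin.cons_self_tail u, comp_cons_phi, thf_cons, thf_cons]
    have h3 : (phi (u 0)).1 = (u 0).1 + 1 := rfl
    have h2 : (phi (u 0)).2 = (u 0).2 := rfl
    rw [h3, h2, ih]
    have h1 : (u 0).1 + 1 - (b + 1) = (u 0).1 - b := by ring
    rw [h1]

/-! ### cons-lemma for the rack differential of `prodOp` -/

lemma d_mon_eq {X : Type} (op : X → X → X) (n : ℕ) (w : Fin (n+1) → X) :
    d op n (mon w) = dMon op w := by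
  show Finsupp.liftAddHom _ (Finsupp.single _ 1) = _
  rw [Finsupp.liftAddHom_apply_single]
  simp

lemma d_zero_mon {X : Type} (op : X → X → X) (w : Fin 1 → X) : d op 0 (mon w) = 0 := by
  rw [d_mon_eq]
  unfold dMon
  simp

lemma del_cons_succ {n : ℕ} (y : ℤ × S) (v : Fin (n+1) → ℤ × S) (j : Fin n) :
    del (Fin.cons y v) j.succ = Fin.cons y (del v j) := by
  funext k
  induction k using Fin.cases with
  | zero => simp [del, Fin.castSucc_zero]
  | succ k =>
    simp only [del, Fin.cons_succ, Fin.val_succ]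
    by_cases hk : (k : ℕ) < (j : ℕ)
    · rw [if_pos (by omega), if_pos hk, ← Fin.succ_castSucc, Fin.cons_succ]
    · rw [if_neg (by omega), if_neg hk]

lemma act_cons_succ {n : ℕ} (y : ℤ × S) (v : Fin (n+1) → ℤ × S) (j : Fin n) :
    act (prodOp S) (Fin.cons y v) j.succ = Fin.cons y (act (prodOp S) v j) := by
  funext k
  induction k using Fin.cases with
  | zero => simp [act, Fin.castSucc_zero]
  | succ k =>
    simp only [act, Fin.cons_succ, Fin.val_succ]
    by_cases hk : (k : ℕ) < (j : ℕ)
    · rw [if_pos (by omega), if_pos hk, ← Fin.succ_castSucc, Fin.cons_succ]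
    · rw [if_neg (by omega), if_neg hk]
      simp [prodOp]

lemma del_zero {n : ℕ} (w : Fin (n+2) → ℤ × S) : del w 0 = Fin.tail w := by
  funext k
  simp [del, Fin.tail]

lemma act_zero {n : ℕ} (w : Fin (n+2) → ℤ × S) : act (prodOp S) w 0 = phi ∘ Fin.tail w := by
  funext k
  simp [act, prodOp, phi, Fin.tail]

lemma d_cons_prod (n : ℕ) (y : ℤ × S) (v : Fin (n+1) → ℤ × S) :
    d (prodOp S) (n+1) (mon (Fin.cons y v)) =
      mon v - mon (phi ∘ v) - consHom y n (d (prodOp S) n (mon v)) := by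
  rw [d_mon_eq]
  unfold dMon
  rw [Fin.sum_univ_succ]
  have h0 : ((-1:ℤ) ^ (((0 : Fin (n+1))) : ℕ)) •
      (mon (del (Fin.cons y v) 0) - mon (act (prodOp S) (Fin.cons y v) 0))
      = mon v - mon (phi ∘ v) := by
    rw [del_zero, act_zero, Fin.tail_cons]
    simp
  rw [h0]
  have hterm : ∀ j : Fin n,
      ((-1:ℤ) ^ ((j.succ : Fin (n+1)) : ℕ)) •
        (mon (del (Fin.cons y v) j.succ) - mon (act (prodOp S) (Fin.cons y v) j.succ))
      = -(((-1:ℤ) ^ (j : ℕ)) •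
          (mon (Fin.cons y (del v j)) - mon (Fin.cons y (act (prodOp S) v j)))) := by
    intro j
    rw [del_cons_succ, act_cons_succ, Fin.val_succ, pow_succ, mul_smul]
    rw [neg_smul, one_smul, smul_neg]
  rw [Finset.sum_congr rfl (fun j _ => hterm j)]
  rw [Finset.sum_neg_distrib]
  have hrhs : consHom y n (d (prodOp S) n (mon v))
      = ∑ j : Fin n, ((-1:ℤ) ^ (j : ℕ)) •
          (mon (Fin.cons y (del v j)) - mon (Fin.cons y (act (prodOp S) v j))) := by
    rw [d_mon_eq]
    unfold dMon
    rw [map_sum]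
    refine Finset.sum_congr rfl (fun j _ => ?_)
    rw [map_zsmul, map_sub, consHom_mon, consHom_mon]
  rw [hrhs]
  abel

/-! ### Chain property of the difference-coordinate change -/

lemma Th_chain : ∀ (n : ℕ) (a : ℤ) (x : CR (ℤ × S) (n+1)),
    Th n a (d (prodOp S) n x) = Dp n (Th (n+1) a x) := by
  intro n
  induction n with
  | zero =>
    intro a x
    refine hom_ext_apply
      (f := (((Th 0 a : CR (ℤ × S) 0 ≃+ CR (ℤ × S) 0)) :
        CR (ℤ × S) 0 →+ CR (ℤ × S) 0).comp (d (prodOp S) 0))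
      (g := (Dp 0).comp (((Th 1 a : CR (ℤ × S) 1 ≃+ CR (ℤ × S) 1)) :
        CR (ℤ × S) 1 →+ CR (ℤ × S) 1)) (fun w => ?_) x
    simp only [AddMonoidHom.comp_apply, AddMonoidHom.coe_coe]
    rw [d_zero_mon, map_zero, Dp_zero_eq]
    rfl
  | succ n ih =>
    intro a x
    refine hom_ext_apply
      (f := (((Th (n+1) a : CR (ℤ × S) (n+1) ≃+ CR (ℤ × S) (n+1))) :
        CR (ℤ × S) (n+1) →+ CR (ℤ × S) (n+1)).comp (d (prodOp S) (n+1)))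
      (g := (Dp (n+1)).comp (((Th (n+2) a : CR (ℤ × S) (n+2) ≃+ CR (ℤ × S) (n+2))) :
        CR (ℤ × S) (n+2) →+ CR (ℤ × S) (n+2))) (fun w => ?_) x
    simp only [AddMonoidHom.comp_apply, AddMonoidHom.coe_coe]
    rw [← Fin.cons_self_tail w]
    set y := w 0 with hy
    set v := Fin.tail w with hv
    rw [d_cons_prod, map_sub, map_sub, Th_consHom, ih y.1 (mon v)]
    rw [Th_mon (n+2) a (Fin.cons y v), thf_cons, Dp_cons, ← Th_mon (n+1) y.1 v]
    -- identify the two head-shift terms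
    have hc1 : hs (y.1 - a) n (Th (n+1) y.1 (mon v)) = Th (n+1) a (mon v) := by
      rw [Th_mon, Th_mon]
      rw [← Fin.cons_self_tail v, thf_cons, thf_cons, hs_cons]
      have h1 : ((v 0).1 - y.1) + (y.1 - a) = (v 0).1 - a := by ring
      rw [h1]
    have hc2 : hs (y.1 - a + 1) n (Th (n+1) y.1 (mon v)) = Th (n+1) a (mon (phi ∘ v)) := by
      rw [Th_mon, Th_mon]
      rw [← Fin.cons_self_tail v, thf_cons, comp_cons_phi, thf_cons, hs_cons]
      have h3 : (phi (v 0)).1 = (v 0).1 + 1 := rfl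
      have h2 : (phi (v 0)).2 = (v 0).2 := rfl
      rw [h3, h2, thf_phi]
      have h1 : ((v 0).1 - y.1) + (y.1 - a + 1) = (v 0).1 + 1 - a := by ring
      rw [h1]
    rw [hc1, hc2]

/-! ### The per-letter basis change Ψ -/

def bet (s₀ : S) (y : ℤ × S) : (ℤ × S) →₀ ℤ :=
  Finsupp.single y 1 - (if y.2 = s₀ then 0 else Finsupp.single (y.1, s₀) 1)

def bet' (s₀ : S) (y : ℤ × S) : (ℤ × S) →₀ ℤ :=
  Finsupp.single y 1 + (if y.2 = s₀ then 0 else Finsupp.single (y.1, s₀) 1)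

def Bb (s₀ : S) : ((ℤ × S) →₀ ℤ) →+ ((ℤ × S) →₀ ℤ) :=
  Finsupp.liftAddHom fun y => zmultiplesHom _ (bet s₀ y)

def Bb' (s₀ : S) : ((ℤ × S) →₀ ℤ) →+ ((ℤ × S) →₀ ℤ) :=
  Finsupp.liftAddHom fun y => zmultiplesHom _ (bet' s₀ y)

lemma Bb_single (s₀ : S) (y : ℤ × S) : Bb s₀ (Finsupp.single y 1) = bet s₀ y := by
  simp [Bb, Finsupp.liftAddHom_apply_single]

lemma Bb'_single (s₀ : S) (y : ℤ × S) : Bb' s₀ (Finsupp.single y 1) = bet' s₀ y := by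
  simp [Bb', Finsupp.liftAddHom_apply_single]

lemma Bb_bet' (s₀ : S) (y : ℤ × S) : Bb s₀ (bet' s₀ y) = Finsupp.single y 1 := by
  unfold bet'
  rw [map_add, Bb_single]
  by_cases h : y.2 = s₀
  · rw [if_pos h, map_zero, add_zero]
    unfold bet
    rw [if_pos h, sub_zero]
  · rw [if_neg h, Bb_single]
    unfold bet
    rw [if_neg h]
    have h2 : (((y.1, s₀) : ℤ × S)).2 = s₀ := rfl
    rw [if_pos h2, sub_zero]
    abel

lemma Bb'_bet (s₀ : S) (y : ℤ × S) : Bb' s₀ (bet s₀ y) = Finsupp.single y 1 := by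
  unfold bet
  rw [map_sub, Bb'_single]
  by_cases h : y.2 = s₀
  · rw [if_pos h, map_zero, sub_zero]
    unfold bet'
    rw [if_pos h, add_zero]
  · rw [if_neg h, Bb'_single]
    unfold bet'
    rw [if_neg h]
    have h2 : (((y.1, s₀) : ℤ × S)).2 = s₀ := rfl
    rw [if_pos h2, add_zero]
    abel

lemma bet_shX (s₀ : S) (a : ℤ) (y : ℤ × S) :
    shX a (bet s₀ y) = bet s₀ (y.1 + a, y.2) := by
  unfold bet
  rw [map_sub, shX_single]
  by_cases h : y.2 = s₀
  · rw [if_pos h, if_pos h, map_zero]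
  · rw [if_neg h, if_neg h, shX_single]

def Psi (s₀ : S) : (n : ℕ) → CR (ℤ × S) n →+ CR (ℤ × S) n
  | 0 => AddMonoidHom.id _
  | (n+1) => Finsupp.liftAddHom fun w =>
      zmultiplesHom _ (MC n (bet s₀ (w 0)) (Psi s₀ n (mon (Fin.tail w))))

def Psi' (s₀ : S) : (n : ℕ) → CR (ℤ × S) n →+ CR (ℤ × S) n
  | 0 => AddMonoidHom.id _
  | (n+1) => Finsupp.liftAddHom fun w =>
      zmultiplesHom _ (MC n (bet' s₀ (w 0)) (Psi' s₀ n (mon (Fin.tail w))))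

lemma Psi_cons (s₀ : S) (n : ℕ) (y : ℤ × S) (v : Fin n → ℤ × S) :
    Psi s₀ (n+1) (mon (Fin.cons y v)) = MC n (bet s₀ y) (Psi s₀ n (mon v)) := by
  show Finsupp.liftAddHom _ (Finsupp.single _ 1) = _
  rw [Finsupp.liftAddHom_apply_single]
  simp [Fin.tail_cons]

lemma Psi'_cons (s₀ : S) (n : ℕ) (y : ℤ × S) (v : Fin n → ℤ × S) :
    Psi' s₀ (n+1) (mon (Fin.cons y v)) = MC n (bet' s₀ y) (Psi' s₀ n (mon v)) := by
  show Finsupp.liftAddHom _ (Finsupp.single _ 1) = _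
  rw [Finsupp.liftAddHom_apply_single]
  simp [Fin.tail_cons]

lemma Psi_consHom (s₀ : S) (n : ℕ) (y : ℤ × S) (x : CR (ℤ × S) n) :
    Psi s₀ (n+1) (consHom y n x) = MC n (bet s₀ y) (Psi s₀ n x) := by
  refine hom_ext_apply (f := (Psi s₀ (n+1)).comp (consHom y n))
    (g := (MC n (bet s₀ y)).comp (Psi s₀ n)) (fun u => ?_) x
  simp only [AddMonoidHom.comp_apply]
  rw [consHom_mon, Psi_cons]

lemma Psi'_consHom (s₀ : S) (n : ℕ) (y : ℤ × S) (x : CR (ℤ × S) n) :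
    Psi' s₀ (n+1) (consHom y n x) = MC n (bet' s₀ y) (Psi' s₀ n x) := by
  refine hom_ext_apply (f := (Psi' s₀ (n+1)).comp (consHom y n))
    (g := (MC n (bet' s₀ y)).comp (Psi' s₀ n)) (fun u => ?_) x
  simp only [AddMonoidHom.comp_apply]
  rw [consHom_mon, Psi'_cons]

lemma Psi_MC (s₀ : S) (n : ℕ) (z : (ℤ × S) →₀ ℤ) (x : CR (ℤ × S) n) :
    Psi s₀ (n+1) (MC n z x) = MC n (Bb s₀ z) (Psi s₀ n x) := by
  induction z using Finsupp.induction_linear with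
  | zero => simp
  | add f g hf hg =>
    simp only [map_add, AddMonoidHom.add_apply] at *
    rw [hf, hg]
  | single y k =>
    rw [sing_smul, map_zsmul, map_zsmul, AddMonoidHom.smul_apply, MC_single, map_zsmul,
      Psi_consHom, Bb_single, map_zsmul (MC n)]
    rfl

lemma Psi'_MC (s₀ : S) (n : ℕ) (z : (ℤ × S) →₀ ℤ) (x : CR (ℤ × S) n) :
    Psi' s₀ (n+1) (MC n z x) = MC n (Bb' s₀ z) (Psi' s₀ n x) := by
  induction z using Finsupp.induction_linear with
  | zero => simp
  | add f g hf hg =>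
    simp only [map_add, AddMonoidHom.add_apply] at *
    rw [hf, hg]
  | single y k =>
    rw [sing_smul, map_zsmul, map_zsmul, AddMonoidHom.smul_apply, MC_single, map_zsmul,
      Psi'_consHom, Bb'_single, map_zsmul (MC n)]
    rfl

lemma PsiPsi' (s₀ : S) : ∀ (n : ℕ) (x : CR (ℤ × S) n), Psi s₀ n (Psi' s₀ n x) = x := by
  intro n
  induction n with
  | zero => intro x; rfl
  | succ n ih =>
    intro x
    refine hom_ext_apply (f := (Psi s₀ (n+1)).comp (Psi' s₀ (n+1)))
      (g := AddMonoidHom.id _) (fun w => ?_) x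
    simp only [AddMonoidHom.comp_apply, AddMonoidHom.id_apply]
    rw [← Fin.cons_self_tail w, Psi'_cons, Psi_MC, Bb_bet', MC_single]
    have hih : Psi s₀ n (Psi' s₀ n (mon (Fin.tail w))) = mon (Fin.tail w) := ih _
    rw [hih, consHom_mon]

lemma Psi'Psi (s₀ : S) : ∀ (n : ℕ) (x : CR (ℤ × S) n), Psi' s₀ n (Psi s₀ n x) = x := by
  intro n
  induction n with
  | zero => intro x; rfl
  | succ n ih =>
    intro x
    refine hom_ext_apply (f := (Psi' s₀ (n+1)).comp (Psi s₀ (n+1)))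
      (g := AddMonoidHom.id _) (fun w => ?_) x
    simp only [AddMonoidHom.comp_apply, AddMonoidHom.id_apply]
    rw [← Fin.cons_self_tail w, Psi_cons, Psi'_MC, Bb'_bet, MC_single]
    have hih : Psi' s₀ n (Psi s₀ n (mon (Fin.tail w))) = mon (Fin.tail w) := ih _
    rw [hih, consHom_mon]

lemma Psi_hs (s₀ : S) (n : ℕ) (a : ℤ) (x : CR (ℤ × S) (n+1)) :
    Psi s₀ (n+1) (hs a n x) = hs a n (Psi s₀ (n+1) x) := by
  refine hom_ext_apply (f := (Psi s₀ (n+1)).comp (hs a n))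
    (g := (hs a n).comp (Psi s₀ (n+1))) (fun w => ?_) x
  simp only [AddMonoidHom.comp_apply]
  rw [← Fin.cons_self_tail w, hs_cons, Psi_cons, Psi_cons, hs_MC, bet_shX]

lemma TDp_bet (s₀ : S) (n : ℕ) (y : ℤ × S) :
    TDp n (bet s₀ y) = (if y.2 = s₀ then hs y.1 n - hs (y.1 + 1) n else 0) := by
  unfold bet
  rw [map_sub, TDp_single]
  by_cases h : y.2 = s₀
  · rw [if_pos h, if_pos h, map_zero, sub_zero]
  · rw [if_neg h, if_neg h, TDp_single, sub_self]

/-! ### Chain property of Ψ -/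

lemma Psi_chain (s₀ : S) : ∀ (n : ℕ) (x : CR (ℤ × S) (n+1)),
    Dp n (Psi s₀ (n+1) x) = Psi s₀ n (Dm s₀ n x) := by
  intro n
  induction n with
  | zero =>
    intro x
    rw [Dp_zero_eq, Dm_zero_eq]
    simp only [AddMonoidHom.zero_apply, map_zero]
  | succ n ih =>
    intro x
    refine hom_ext_apply (f := (Dp (n+1)).comp (Psi s₀ (n+2)))
      (g := (Psi s₀ (n+1)).comp (Dm s₀ (n+1))) (fun w => ?_) x
    simp only [AddMonoidHom.comp_apply]
    rw [← Fin.cons_self_tail w]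
    set y := w 0 with hy
    set v := Fin.tail w with hv
    rw [Psi_cons, Dp_MC, Dm_cons, map_sub, Psi_consHom, TDp_bet, ih (mon v)]
    by_cases h : y.2 = s₀
    · rw [if_pos h, if_pos h, map_sub, Psi_hs, Psi_hs, AddMonoidHom.sub_apply]
    · rw [if_neg h, if_neg h, map_zero, AddMonoidHom.zero_apply]

/-- Ψ as an additive equivalence. -/
def PsiE (s₀ : S) (n : ℕ) : CR (ℤ × S) n ≃+ CR (ℤ × S) n :=
  AddMonoidHom.toAddEquiv (Psi s₀ n) (Psi' s₀ n)
    (by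
      refine ext_mon (fun w => ?_)
      simp only [AddMonoidHom.comp_apply, AddMonoidHom.id_apply]
      exact Psi'Psi s₀ n (mon w))
    (by
      refine ext_mon (fun w => ?_)
      simp only [AddMonoidHom.comp_apply, AddMonoidHom.id_apply]
      exact PsiPsi' s₀ n (mon w))

/-! ### The composite chain equivalence -/

def Xi (s₀ : S) (n : ℕ) : CR (ℤ × S) n ≃+ CR (ℤ × S) n := (Th n 0).trans (PsiE s₀ n).symm

lemma Xi_apply (s₀ : S) (n : ℕ) (x : CR (ℤ × S) n) : Xi s₀ n x = Psi' s₀ n (Th n 0 x) := rfl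

lemma Psi'_chain (s₀ : S) (n : ℕ) (y : CR (ℤ × S) (n+1)) :
    Psi' s₀ n (Dp n y) = Dm s₀ n (Psi' s₀ (n+1) y) := by
  have h := Psi_chain s₀ n (Psi' s₀ (n+1) y)
  rw [PsiPsi'] at h
  rw [h, Psi'Psi]

lemma Xi_chain (s₀ : S) (n : ℕ) (x : CR (ℤ × S) (n+1)) :
    Xi s₀ n (d (prodOp S) n x) = Dm s₀ n (Xi s₀ (n+1) x) := by
  rw [Xi_apply, Xi_apply, Th_chain, Psi'_chain]

lemma Xi_inv_chain (s₀ : S) (n : ℕ) (y : CR (ℤ × S) (n+1)) :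
    d (prodOp S) n ((Xi s₀ (n+1)).symm y) = (Xi s₀ n).symm (Dm s₀ n y) := by
  have h := Xi_chain s₀ n ((Xi s₀ (n+1)).symm y)
  rw [AddEquiv.apply_symm_apply] at h
  rw [← h, AddEquiv.symm_apply_apply]

/-! ### Abstract homology computation from a deformation retraction -/

lemma hr_iso {X : Type} (op : X → X → X) (m : ℕ) {G : Type} [AddCommGroup G]
    (P : CR X (m+1) →+ G) (I : G →+ CR X (m+1)) (Hh : CR X (m+1) →+ CR X (m+2))
    (hpi : ∀ g, P (I g) = g)
    (hdi : ∀ g, d op m (I g) = 0)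
    (hpd : ∀ x, P (d op (m+1) x) = 0)
    (hcyc : ∀ x, d op m x = 0 → x = I (P x) + d op (m+1) (Hh x)) :
    Nonempty (HR X op (m+1) ≃+ G) := by
  have hZC : ZC op (m+1) = (d op m).ker := rfl
  set N := (BC op (m+1)).addSubgroupOf (ZC op (m+1)) with hN
  set f : (ZC op (m+1) : AddSubgroup (CR X (m+1))) →+ G := P.comp (ZC op (m+1)).subtype with hf
  have hker : N ≤ f.ker := by
    intro z hz
    rw [hN, AddSubgroup.mem_addSubgroupOf] at hz
    obtain ⟨x, hx⟩ := hz
    rw [AddMonoidHom.mem_ker, hf, AddMonoidHom.comp_apply, AddSubgroup.coe_subtype, ← hx, hpd]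
  set F := QuotientAddGroup.lift N f hker with hF
  have hFsurj : Function.Surjective F := by
    intro g
    have hmem : I g ∈ ZC op (m+1) := by
      rw [hZC, AddMonoidHom.mem_ker]
      exact hdi g
    refine ⟨QuotientAddGroup.mk ⟨I g, hmem⟩, ?_⟩
    rw [hF, QuotientAddGroup.lift_mk, hf, AddMonoidHom.comp_apply, AddSubgroup.coe_subtype]
    exact hpi g
  have hFinj : Function.Injective F := by
    rw [injective_iff_map_eq_zero]
    intro a
    refine QuotientAddGroup.induction_on a (fun z hz => ?_)
    rw [hF, QuotientAddGroup.lift_mk, hf, AddMonoidHom.comp_apply, AddSubgroup.coe_subtype] at hz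
    have hzc : d op m (z : CR X (m+1)) = 0 := z.2
    have hx : (z : CR X (m+1)) = d op (m+1) (Hh (z : CR X (m+1))) := by
      have h1 := hcyc (z : CR X (m+1)) hzc
      rw [hz, map_zero, zero_add] at h1
      exact h1
    rw [QuotientAddGroup.eq_zero_iff, hN, AddSubgroup.mem_addSubgroupOf]
    exact ⟨Hh (z : CR X (m+1)), hx.symm⟩
  exact ⟨AddEquiv.ofBijective F ⟨hFinj, hFsurj⟩⟩

/-! ### The homology of the product rack -/

lemma hr_prod_iso (s₀ : S) (m : ℕ) :
    Nonempty (HR (ℤ × S) (prodOp S) (m+1) ≃+ ((NT s₀ m) →₀ ℤ)) := by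
  refine hr_iso (prodOp S) m
    (P := (pm s₀ m).comp (Xi s₀ (m+1)).toAddMonoidHom)
    (I := ((Xi s₀ (m+1)).symm.toAddMonoidHom).comp (im s₀ m))
    (Hh := ((Xi s₀ (m+2)).symm.toAddMonoidHom).comp
      ((Hm s₀ (m+1)).comp (Xi s₀ (m+1)).toAddMonoidHom))
    ?_ ?_ ?_ ?_
  · intro g
    simp only [AddMonoidHom.comp_apply, AddEquiv.coe_toAddMonoidHom]
    rw [AddEquiv.apply_symm_apply, pm_im]
  · intro g
    simp only [AddMonoidHom.comp_apply, AddEquiv.coe_toAddMonoidHom]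
    rw [Xi_inv_chain, Dm_im, map_zero]
  · intro x
    simp only [AddMonoidHom.comp_apply, AddEquiv.coe_toAddMonoidHom]
    rw [Xi_chain, pm_Dm]
  · intro x hx
    simp only [AddMonoidHom.comp_apply, AddEquiv.coe_toAddMonoidHom]
    have h1 : Dm s₀ m (Xi s₀ (m+1) x) = 0 := by
      rw [← Xi_chain, hx, map_zero]
    have h2 := Lh s₀ m (Xi s₀ (m+1) x)
    rw [h1, map_zero, add_zero, Pim_eq] at h2
    have h3 : Xi s₀ (m+1) x
        = im s₀ m (pm s₀ m (Xi s₀ (m+1) x)) + Dm s₀ (m+1) (Hm s₀ (m+1) (Xi s₀ (m+1) x)) := by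
      rw [h2]; abel
    have h4 := congrArg (Xi s₀ (m+1)).symm h3
    rw [AddEquiv.symm_apply_apply, map_add] at h4
    have h5 := Xi_inv_chain s₀ (m+1) (Hm s₀ (m+1) (Xi s₀ (m+1) x))
    rw [h5]
    exact h4

end NKF

/-- Naive Künneth fails for rack homology: for the product rack `(ℤ,+1) × (S,id)` with
`|S| = r ≥ 2` and `n ≥ 2`, the rank `r(r−1)^{n−1}` of `HR_n` differs from
`Σ_{p+q=n} rank HR_p(ℤ,+1) · rank HR_q(S,id) = r^n + r^{n−1}`. -/
theorem naive_kunneth_fails (S : Type) [Fintype S] (r : ℕ) (hr : Fintype.card S = r)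
    (h2 : 2 ≤ r) (n : ℕ) (hn : 2 ≤ n) :
    Nonempty (HR (ℤ × S) (prodOp S) n ≃+ (Fin (r * (r-1)^(n-1)) → ℤ)) ∧
      r * (r-1)^(n-1) ≠ r^n + r^(n-1) := by
  classical
  constructor
  · obtain ⟨m, rfl⟩ : ∃ m, n = m + 1 := ⟨n - 1, by omega⟩
    have hS : Nonempty S := by
      rw [← Fintype.card_pos_iff, hr]
      omega
    obtain ⟨s₀⟩ := hS
    obtain ⟨e⟩ := NKF.hr_prod_iso s₀ m
    have hcard1 : Fintype.card {t : S // t ≠ s₀} = r - 1 := by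
      rw [Fintype.card_subtype_compl, Fintype.card_subtype_eq, hr]
    have hcard : Fintype.card (NKF.NT s₀ m) = r * (r-1)^(m+1-1) := by
      show Fintype.card ((Fin m → {t : S // t ≠ s₀}) × S) = _
      rw [Fintype.card_prod, Fintype.card_fun, Fintype.card_fin, hcard1, hr,
        Nat.add_sub_cancel, mul_comm]
    exact ⟨e.trans ((Finsupp.domCongr (Fintype.equivFinOfCardEq hcard)).trans
      Finsupp.addEquivFunOnFinite)⟩
  · intro heq
    have hr1 : (r-1)^(n-1) < r^(n-1) := Nat.pow_lt_pow_left (by omega) (by omega)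
    have h3 : r * r^(n-1) = r^n := by
      rw [← pow_succ']
      congr 1
      omega
    have h4 : r * (r-1)^(n-1) < r * r^(n-1) :=
      Nat.mul_lt_mul_of_pos_left hr1 (by omega)
    have h5 : 0 < r^(n-1) := pow_pos (by omega) _
    linarith

end
end
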